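/- arXiv:1604.07690 — 4 statements merged into one kernel-verified Lean document; each statement's English description precedes it below -/
import Mathlib

section
/- Let (y_n) be a sequence of non-negative reals with y_n → 0, let α ∈ (0,1), and suppose ∑_{n=1}^∞ exp(−α ∑_{k=1}^n y_k) < ∞. Set β := 2α/(1+α) and x_n := ∏_{k=1}^n (1+β y_k)⁻¹. Then ∑_{n=1}^∞ x_n < ∞. -/
theorem summable_x (y : ℕ → ℝ) (hy : ∀ n, 0 ≤ y n)
    (hy0 : Filter.Tendsto y Filter.atTop (nhds 0))
    (α : ℝ) (hα : α ∈ Set.Ioo (0 : ℝ) 1)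
    (hsum : Summable fun n => Real.exp (-α * ∑ k ∈ Finset.Icc 1 n, y k))
    (β : ℝ) (hβ : β = 2 * α / (1 + α))
    (x : ℕ → ℝ) (hx : ∀ n, x n = ∏ k ∈ Finset.Icc 1 n, (1 + β * y k)⁻¹) :
    Summable x := by
  obtain ⟨hα0, hα1⟩ := hα
  have h1α : (0:ℝ) < 1 + α := by linarith
  have hβ0 : 0 < β := by rw [hβ]; positivity
  have hpos : ∀ k, (0:ℝ) < 1 + β * y k := fun k => by nlinarith [hy k, mul_nonneg hβ0.le (hy k)]
  have hxnn : ∀ n, 0 ≤ x n := fun n => by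
    rw [hx n]; exact Finset.prod_nonneg fun k _ => inv_nonneg.2 (hpos k).le
  -- choose N with y k small for k ≥ N
  set ε : ℝ := (1 - α) / (1 + α) / β with hε
  have hεpos : 0 < ε := div_pos (div_pos (by linarith) h1α) hβ0
  have hev : ∀ᶠ k in Filter.atTop, y k < ε := hy0.eventually_lt_const hεpos
  obtain ⟨N, hN⟩ := Filter.eventually_atTop.mp hev
  -- pointwise key bound
  have hkey : ∀ k, N ≤ k → (1 + β * y k)⁻¹ ≤ Real.exp (-(α * y k)) := by
    intro k hk
    have hyk := hy k
    have hsmall : β * y k ≤ (1 - α) / (1 + α) := by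
      have := (hN k hk).le
      calc β * y k ≤ β * ε := by nlinarith
        _ = (1 - α) / (1 + α) := by rw [hε, mul_div_assoc']; exact mul_div_cancel_left₀ _ hβ0.ne'
    have hαy : α * y k < 1 := by
      have hβα : α ≤ β := by rw [hβ]; rw [le_div_iff₀ h1α]; nlinarith
      have h2 : (1 - α) / (1 + α) < 1 := by rw [div_lt_one h1α]; linarith
      nlinarith
    have hpos1 : (0:ℝ) < 1 - α * y k := by linarith
    have hq : 1 ≤ (1 + β * y k) * (1 - α * y k) := by
      have hd : β - α = α * (1 - α) / (1 + α) := by rw [hβ]; field_simp; ring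
      have h3 : α * (β * y k) ≤ α * ((1 - α) / (1 + α)) :=
        mul_le_mul_of_nonneg_left hsmall hα0.le
      have h4 : α * β * y k ≤ β - α := by rw [hd, mul_div_assoc]; linarith
      nlinarith
    have h1 : Real.exp (α * y k) ≤ 1 + β * y k := by
      have he : 1 - α * y k ≤ Real.exp (-(α * y k)) := by
        have := Real.add_one_le_exp (-(α * y k)); linarith
      have h2 : Real.exp (α * y k) ≤ (1 - α * y k)⁻¹ := by
        have h2 := inv_anti₀ hpos1 he
        rwa [← Real.exp_neg, neg_neg] at h2
      refine h2.trans ?_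
      calc (1 - α * y k)⁻¹ ≤ (1 - α * y k)⁻¹ * ((1 + β * y k) * (1 - α * y k)) :=
            le_mul_of_one_le_right (inv_nonneg.2 hpos1.le) hq
        _ = 1 + β * y k := by field_simp
    rw [Real.exp_neg]
    exact inv_anti₀ (Real.exp_pos _) h1
  -- main comparison for n ≥ N
  set C : ℝ := x N * Real.exp (α * ∑ k ∈ Finset.Icc 1 N, y k) with hC
  have hmain : ∀ n, N ≤ n → x n ≤ C * Real.exp (-α * ∑ k ∈ Finset.Icc 1 n, y k) := by
    intro n hn
    have hicc : ∀ m : ℕ, Finset.Icc 1 m = Finset.Ioc 0 m := fun m => rfl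
    rw [hx n, hC, hx N]
    simp only [hicc]
    rw [← Finset.prod_Ioc_consecutive (fun k => (1 + β * y k)⁻¹) (Nat.zero_le N) hn,
        ← Finset.sum_Ioc_consecutive (fun k => y k) (Nat.zero_le N) hn]
    have hb : ∏ k ∈ Finset.Ioc N n, (1 + β * y k)⁻¹
        ≤ Real.exp (-α * ∑ k ∈ Finset.Ioc N n, y k) := by
      calc ∏ k ∈ Finset.Ioc N n, (1 + β * y k)⁻¹
          ≤ ∏ k ∈ Finset.Ioc N n, Real.exp (-(α * y k)) := by
            apply Finset.prod_le_prod (fun k _ => inv_nonneg.2 (hpos k).le)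
            exact fun k hk => hkey k (Finset.mem_Ioc.mp hk).1.le
        _ = Real.exp (∑ k ∈ Finset.Ioc N n, -(α * y k)) := (Real.exp_sum _ _).symm
        _ = Real.exp (-α * ∑ k ∈ Finset.Ioc N n, y k) := by
            congr 1
            rw [Finset.mul_sum]
            exact Finset.sum_congr rfl fun k _ => by ring
    have hprodN : 0 ≤ ∏ k ∈ Finset.Ioc 0 N, (1 + β * y k)⁻¹ :=
      Finset.prod_nonneg fun k _ => inv_nonneg.2 (hpos k).le
    calc (∏ k ∈ Finset.Ioc 0 N, (1 + β * y k)⁻¹) * ∏ k ∈ Finset.Ioc N n, (1 + β * y k)⁻¹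
        ≤ (∏ k ∈ Finset.Ioc 0 N, (1 + β * y k)⁻¹) *
            Real.exp (-α * ∑ k ∈ Finset.Ioc N n, y k) :=
          mul_le_mul_of_nonneg_left hb hprodN
      _ = (∏ k ∈ Finset.Ioc 0 N, (1 + β * y k)⁻¹) *
            Real.exp (α * ∑ k ∈ Finset.Ioc 0 N, y k) *
            Real.exp (-α * (∑ k ∈ Finset.Ioc 0 N, y k + ∑ k ∈ Finset.Ioc N n, y k)) := by
          rw [mul_assoc, ← Real.exp_add]; ring_nf
  -- conclude summability
  rw [← summable_nat_add_iff N]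
  apply Summable.of_nonneg_of_le (fun n => hxnn _)
    (fun n => hmain (n + N) (Nat.le_add_left N n))
  exact (summable_nat_add_iff N).mpr (hsum.mul_left C)
end

section
/- Let (y_n) be a sequence of non-negative reals with y_n → 0, let α ∈ (0,1), and suppose ∑_{n=1}^∞ exp(−α ∑_{k=1}^n y_k) < ∞. Set β := 2α/(1+α) and x_n := ∏_{k=1}^n (1+β y_k)⁻¹. Then for every n ≥ 1, x_n < ∑_{k=n+1}^∞ x_k y_k < ∞. -/
theorem verification_lemma (y : ℕ → ℝ) (hy : ∀ n, 0 ≤ y n)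
    (hy0 : Filter.Tendsto y Filter.atTop (nhds 0))
    (α : ℝ) (hα : α ∈ Set.Ioo (0 : ℝ) 1)
    (hsum : Summable fun n => Real.exp (-α * ∑ k ∈ Finset.Icc 1 n, y k))
    (β : ℝ) (hβ : β = 2 * α / (1 + α))
    (x : ℕ → ℝ) (hx : ∀ n, x n = ∏ k ∈ Finset.Icc 1 n, (1 + β * y k)⁻¹) :
    ∀ n ≥ 1, (Summable fun k => x (k + (n + 1)) * y (k + (n + 1))) ∧
      x n < ∑' k : ℕ, x (k + (n + 1)) * y (k + (n + 1)) := by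
  obtain ⟨hα0, hα1⟩ := hα
  have hβ0 : 0 < β := by rw [hβ]; positivity
  have hβ1 : β < 1 := by rw [hβ, div_lt_one (by linarith)]; linarith
  have hβα : α < β := by
    rw [hβ, lt_div_iff₀ (by linarith)]; nlinarith
  have hfac : ∀ k, 0 < 1 + β * y k := fun k => by
    have := hy k; nlinarith
  have hxpos : ∀ n, 0 < x n := fun n => by
    rw [hx]; exact Finset.prod_pos fun k _ => inv_pos.mpr (hfac k)
  -- recurrence and telescoping key identity
  have hrec : ∀ k, x (k + 1) = x k * (1 + β * y (k + 1))⁻¹ := by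
    intro k
    rw [hx, hx, Finset.prod_Icc_succ_top (Nat.succ_le_succ (Nat.zero_le k))]
  have hkey : ∀ k, β * (x (k + 1) * y (k + 1)) = x k - x (k + 1) := by
    intro k
    have h := hrec k
    have h2 : x k = x (k + 1) * (1 + β * y (k + 1)) := by
      rw [h, mul_assoc, inv_mul_cancel₀ (hfac (k + 1)).ne', mul_one]
    rw [h2]; ring
  -- x tends to 0
  have hxto0 : Filter.Tendsto x Filter.atTop (nhds 0) := by
    set ε : ℝ := (β - α) / (α * β) with hε
    have hε0 : 0 < ε := by apply div_pos <;> nlinarith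
    have hev : ∀ᶠ k in Filter.atTop, y k ≤ ε := by
      exact (hy0.eventually (eventually_lt_nhds hε0)).mono fun k hk => le_of_lt hk
    obtain ⟨M, hM⟩ := hev.exists_forall_of_atTop
    have hcomp : ∀ k, M ≤ k → (1 + β * y k)⁻¹ ≤ Real.exp (-(α * y k)) := by
      intro k hk
      have hyk := hy k
      have hyε := hM k hk
      have hεy : y k * (α * β) ≤ β - α := by
        rw [hε, le_div_iff₀ (by positivity)] at hyε
        exact hyε
      have hlog : α * y k ≤ Real.log (1 + β * y k) := by
        have h1 : Real.log (1 + β * y k)⁻¹ ≤ (1 + β * y k)⁻¹ - 1 :=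
          Real.log_le_sub_one_of_pos (inv_pos.mpr (hfac k))
        rw [Real.log_inv] at h1
        have h2 : 1 - (1 + β * y k)⁻¹ ≤ Real.log (1 + β * y k) := by linarith
        have h4 : (α * y k) * (1 + β * y k) ≤ β * y k := by nlinarith
        have h5 : α * y k ≤ β * y k / (1 + β * y k) :=
          (le_div_iff₀ (hfac k)).mpr h4
        have h6 : β * y k / (1 + β * y k) = 1 - (1 + β * y k)⁻¹ := by
          field_simp
          ring
        linarith
      have hexp : Real.exp (α * y k) ≤ 1 + β * y k :=
        calc Real.exp (α * y k) ≤ Real.exp (Real.log (1 + β * y k)) :=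
              Real.exp_le_exp.mpr hlog
          _ = 1 + β * y k := Real.exp_log (hfac k)
      calc (1 + β * y k)⁻¹ ≤ (Real.exp (α * y k))⁻¹ :=
            inv_anti₀ (Real.exp_pos _) hexp
        _ = Real.exp (-(α * y k)) := by rw [Real.exp_neg]
    set S : ℕ → ℝ := fun n => ∑ k ∈ Finset.Icc 1 n, y k with hS
    have hbound : ∀ N, M ≤ N →
        x N ≤ (x M * Real.exp (α * S M)) * Real.exp (-α * S N) := by
      intro N hN
      have hsplitp : x N = x M * ∏ k ∈ Finset.Ioc M N, (1 + β * y k)⁻¹ := by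
        rw [hx, hx]
        rw [show Finset.Icc 1 N = Finset.Ioc 0 N from Finset.Icc_add_one_left_eq_Ioc 0 N,
          show Finset.Icc 1 M = Finset.Ioc 0 M from Finset.Icc_add_one_left_eq_Ioc 0 M]
        exact (Finset.prod_Ioc_consecutive _ (Nat.zero_le M) hN).symm
      have hsplits : S N = S M + ∑ k ∈ Finset.Ioc M N, y k := by
        rw [hS]
        simp only []
        rw [show Finset.Icc 1 N = Finset.Ioc 0 N from Finset.Icc_add_one_left_eq_Ioc 0 N,
          show Finset.Icc 1 M = Finset.Ioc 0 M from Finset.Icc_add_one_left_eq_Ioc 0 M]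
        exact (Finset.sum_Ioc_consecutive _ (Nat.zero_le M) hN).symm
      have hprodle : ∏ k ∈ Finset.Ioc M N, (1 + β * y k)⁻¹ ≤
          ∏ k ∈ Finset.Ioc M N, Real.exp (-(α * y k)) := by
        apply Finset.prod_le_prod
        · intro k _; exact le_of_lt (inv_pos.mpr (hfac k))
        · intro k hk
          exact hcomp k (le_of_lt (Finset.mem_Ioc.mp hk).1)
      rw [hsplitp]
      calc x M * ∏ k ∈ Finset.Ioc M N, (1 + β * y k)⁻¹
          ≤ x M * ∏ k ∈ Finset.Ioc M N, Real.exp (-(α * y k)) :=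
            mul_le_mul_of_nonneg_left hprodle (le_of_lt (hxpos M))
        _ = x M * Real.exp (∑ k ∈ Finset.Ioc M N, -(α * y k)) := by
            rw [Real.exp_sum]
        _ = (x M * Real.exp (α * S M)) * Real.exp (-α * S N) := by
            rw [hsplits, mul_assoc, ← Real.exp_add]
            congr 1
            rw [Finset.sum_neg_distrib, ← Finset.mul_sum]
            ring
    have hexp0 : Filter.Tendsto (fun n => Real.exp (-α * S n)) Filter.atTop (nhds 0) :=
      hsum.tendsto_atTop_zero
    have hC0 : Filter.Tendsto
        (fun n => (x M * Real.exp (α * S M)) * Real.exp (-α * S n))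
        Filter.atTop (nhds 0) := by
      have := hexp0.const_mul (x M * Real.exp (α * S M))
      simpa using this
    exact squeeze_zero' (Filter.Eventually.of_forall fun n => le_of_lt (hxpos n))
      (Filter.eventually_atTop.mpr ⟨M, hbound⟩) hC0
  intro n hn
  set f : ℕ → ℝ := fun k => x (k + (n + 1)) * y (k + (n + 1)) with hf
  have hf0 : ∀ k, 0 ≤ f k := fun k =>
    mul_nonneg (le_of_lt (hxpos _)) (hy _)
  have hpartial : ∀ N, ∑ k ∈ Finset.range N, f k = (x n - x (n + N)) / β := by
    intro N
    have htel := Finset.sum_range_sub' (fun k => x (n + k)) N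
    simp only [Nat.add_zero] at htel
    have hsum2 : ∑ k ∈ Finset.range N, (β * f k) = x n - x (n + N) := by
      rw [← htel]
      apply Finset.sum_congr rfl
      intro k _
      simp only [hf]
      rw [show k + (n + 1) = n + k + 1 from by ring]
      exact hkey (n + k)
    rw [← Finset.mul_sum] at hsum2
    rw [eq_div_iff hβ0.ne', mul_comm]
    exact hsum2
  have hsummable : Summable f := by
    apply summable_of_sum_range_le hf0 (c := x n / β)
    intro N
    rw [hpartial]
    gcongr
    linarith [hxpos (n + N)]
  refine ⟨hsummable, ?_⟩
  have h1 : Filter.Tendsto (fun N => x (n + N)) Filter.atTop (nhds 0) := by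
    have := hxto0.comp (Filter.tendsto_add_atTop_nat n)
    simpa [Function.comp_def, add_comm] using this
  have htend : Filter.Tendsto (fun N => ∑ k ∈ Finset.range N, f k)
      Filter.atTop (nhds (x n / β)) := by
    simp only [hpartial]
    have h2 : Filter.Tendsto (fun _ : ℕ => x n) Filter.atTop (nhds (x n)) :=
      tendsto_const_nhds
    have := (h2.sub h1).div_const β
    simpa using this
  have heq : ∑' k, f k = x n / β :=
    tendsto_nhds_unique hsummable.hasSum.tendsto_sum_nat htend
  rw [heq, lt_div_iff₀ hβ0]
  nlinarith [hxpos n]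
end

section
/- Let B = (B_t)_{t∈[0,1]} be a standard Brownian motion, σ > 0, γ ∈ (0,1), and define ξ_n := (σ B_{n^{−γ}} − σ B_{(n+1)^{−γ}})⁺ for n ≥ 1. Then for every α > 0, E[∑_{n=1}^∞ exp(−α ∑_{k=1}^n ξ_k)] < ∞. -/
open MeasureTheory ProbabilityTheory

section BrownianAux

open Real
open scoped NNReal ENNReal

/-- Probability that a standard gaussian exceeds 1. -/
noncomputable def gaussQ : ℝ := (gaussianReal 0 1 (Set.Ici (1:ℝ))).toReal

lemma gaussQ_lt_top : gaussianReal 0 1 (Set.Ici (1:ℝ)) < ⊤ :=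
  lt_of_le_of_lt (prob_le_one) ENNReal.one_lt_top

lemma gaussQ_pos : 0 < gaussQ := by
  rw [gaussQ, ENNReal.toReal_pos_iff]
  refine ⟨?_, gaussQ_lt_top⟩
  rw [gaussianReal_apply 0 one_ne_zero]
  have h1 : ENNReal.ofReal ((Real.sqrt (2 * π))⁻¹ * Real.exp (-2)) * volume (Set.Icc (1:ℝ) 2)
      ≤ ∫⁻ x in Set.Icc (1:ℝ) 2, gaussianPDF 0 1 x := by
    rw [← setLIntegral_const]
    refine setLIntegral_mono (measurable_gaussianPDF 0 1) ?_
    intro x hx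
    rw [gaussianPDF]
    refine ENNReal.ofReal_le_ofReal ?_
    rw [gaussianPDFReal]
    have hx1 : (1:ℝ) ≤ x := hx.1
    have hx2 : x ≤ 2 := hx.2
    simp only [NNReal.coe_one, mul_one, sub_zero]
    refine mul_le_mul_of_nonneg_left (Real.exp_le_exp.2 ?_) (by positivity)
    nlinarith [sq_nonneg x]
  have h2 : (0:ℝ≥0∞) < ENNReal.ofReal ((Real.sqrt (2 * π))⁻¹ * Real.exp (-2)) *
      volume (Set.Icc (1:ℝ) 2) := by
    rw [Real.volume_Icc]
    refine ENNReal.mul_pos ?_ ?_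
    · simp only [ne_eq, ENNReal.ofReal_eq_zero, not_le]
      positivity
    · norm_num
  have h3 : (∫⁻ x in Set.Icc (1:ℝ) 2, gaussianPDF 0 1 x)
      ≤ ∫⁻ x in Set.Ici (1:ℝ), gaussianPDF 0 1 x :=
    lintegral_mono_set (fun x hx => hx.1)
  exact lt_of_lt_of_le (lt_of_lt_of_le h2 h1) h3

lemma gauss_tail (v : ℝ≥0) (hv : 0 < (v:ℝ)) :
    gaussianReal 0 v (Set.Ici (Real.sqrt v)) = gaussianReal 0 1 (Set.Ici 1) := by
  have hs : (0:ℝ) < Real.sqrt v := Real.sqrt_pos.2 hv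
  have hmap : (gaussianReal 0 1).map (fun x => Real.sqrt v * x) = gaussianReal 0 v := by
    have := gaussianReal_map_const_mul (μ := 0) (v := 1) (Real.sqrt (v:ℝ))
    rw [this]
    congr 1
    · ring
    · ext
      simp [Real.sq_sqrt hv.le]
  rw [← hmap, Measure.map_apply (by fun_prop) measurableSet_Ici]
  congr 1
  ext x
  simp only [Set.mem_preimage, Set.mem_Ici]
  constructor
  · intro h
    nlinarith
  · intro h
    nlinarith

lemma x_exp_le (x : ℝ) (hx : 0 ≤ x) : x * Real.exp (-x) ≤ 1 - Real.exp (-x) := by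
  have h := Real.add_one_le_exp x
  have h2 : (x + 1) * Real.exp (-x) ≤ Real.exp x * Real.exp (-x) :=
    mul_le_mul_of_nonneg_right h (Real.exp_nonneg _)
  rw [← Real.exp_add, add_neg_cancel, Real.exp_zero] at h2
  nlinarith

lemma gauss_factor_bound {α σ : ℝ} (hα : 0 < α) (hσ : 0 < σ) (v : ℝ≥0)
    (hv : 0 < (v:ℝ)) (hv1 : (v:ℝ) ≤ 1) :
    ∫ x, Real.exp (-α * max (σ * x) 0) ∂(gaussianReal 0 v)
      ≤ Real.exp (-(gaussQ * α * Real.exp (-(α * σ)) * σ) * Real.sqrt v) := by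
  have hsv : 0 < Real.sqrt v := Real.sqrt_pos.2 hv
  have hsv1 : Real.sqrt v ≤ 1 := by
    rw [show (1:ℝ) = Real.sqrt 1 by simp]
    exact Real.sqrt_le_sqrt hv1
  set u : ℝ := σ * Real.sqrt v with hu_def
  have hu : 0 < u := mul_pos hσ hsv
  have huσ : u ≤ σ := by nlinarith
  set c : ℝ := 1 - Real.exp (-(α * u)) with hc_def
  have hc0 : 0 ≤ c :=
    sub_nonneg.2 (Real.exp_le_one_iff.2 (neg_nonpos.2 (mul_pos hα hu).le))
  set S : Set ℝ := Set.Ici (Real.sqrt v) with hS_def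
  have hS : MeasurableSet S := measurableSet_Ici
  set ν := gaussianReal 0 v with hν_def
  have hpt : ∀ x, Real.exp (-α * max (σ * x) 0) ≤ 1 - S.indicator (fun _ => c) x := by
    intro x
    by_cases hx : x ∈ S
    · rw [Set.indicator_of_mem hx]
      have hx' : Real.sqrt v ≤ x := hx
      have hmax : max (σ * x) 0 = σ * x := max_eq_left (by nlinarith)
      rw [hmax, hc_def]
      have : -α * (σ * x) ≤ -(α * u) := by
        rw [hu_def]
        nlinarith [mul_le_mul_of_nonneg_left hx' (mul_pos hα hσ).le]
      calc Real.exp (-α * (σ * x)) ≤ Real.exp (-(α * u)) := Real.exp_le_exp.2 this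
        _ = 1 - (1 - Real.exp (-(α * u))) := by ring
    · rw [Set.indicator_of_notMem hx, sub_zero]
      refine Real.exp_le_one_iff.2 ?_
      have : (0:ℝ) ≤ max (σ * x) 0 := le_max_right _ _
      nlinarith
  have hcont : Continuous fun x : ℝ => Real.exp (-α * max (σ * x) 0) := by
    continuity
  have hint1 : Integrable (fun x : ℝ => Real.exp (-α * max (σ * x) 0)) ν := by
    refine Integrable.mono' (integrable_const 1) hcont.aestronglyMeasurable ?_
    refine Filter.Eventually.of_forall fun x => ?_
    rw [Real.norm_eq_abs, abs_of_pos (Real.exp_pos _)]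
    refine Real.exp_le_one_iff.2 ?_
    have : (0:ℝ) ≤ max (σ * x) 0 := le_max_right _ _
    nlinarith
  have hint2 : Integrable (fun x : ℝ => 1 - S.indicator (fun _ => c) x) ν :=
    (integrable_const 1).sub ((integrable_const c).indicator hS)
  have hmono := integral_mono hint1 hint2 hpt
  have hcomp : ∫ x, (1 - S.indicator (fun _ => c) x) ∂ν = 1 - c * gaussQ := by
    rw [integral_sub (integrable_const 1) ((integrable_const c).indicator hS)]
    rw [integral_const, integral_indicator_const _ hS]
    have hνS : (ν S).toReal = gaussQ := by
      rw [hν_def, hS_def, gauss_tail v hv, gaussQ]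
    simp [hνS, mul_comm]
    exact (congrArg (c * ·) hνS).trans (mul_comm _ _)
  rw [hcomp] at hmono
  refine hmono.trans ?_
  have h5 : 1 - c * gaussQ ≤ Real.exp (-(gaussQ * c)) := by
    have := Real.add_one_le_exp (-(gaussQ * c))
    nlinarith
  refine h5.trans (Real.exp_le_exp.2 ?_)
  have h6 : α * u * Real.exp (-(α * σ)) ≤ c := by
    have h7 : α * u * Real.exp (-(α * u)) ≤ c := by
      have := x_exp_le (α * u) (by nlinarith)
      rw [hc_def]; nlinarith
    have h8 : Real.exp (-(α * σ)) ≤ Real.exp (-(α * u)) := Real.exp_le_exp.2 (by nlinarith)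
    nlinarith [mul_le_mul_of_nonneg_left h8 (mul_pos hα hu).le]
  have : gaussQ * (α * u * Real.exp (-(α * σ))) ≤ gaussQ * c :=
    mul_le_mul_of_nonneg_left h6 gaussQ_pos.le
  rw [hu_def] at this
  nlinarith

lemma rpow_diff_ge {γ : ℝ} (hγ0 : 0 < γ) (k : ℕ) (hk : 1 ≤ k) :
    γ * ((k:ℝ)+1) ^ (-γ-1) ≤ (k:ℝ) ^ (-γ) - ((k:ℝ)+1) ^ (-γ) := by
  have hk1 : (1:ℝ) ≤ (k:ℝ) := by exact_mod_cast hk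
  have hab : (k:ℝ) < (k:ℝ)+1 := by linarith
  have hfc : ContinuousOn (fun x : ℝ => x ^ (-γ)) (Set.Icc (k:ℝ) ((k:ℝ)+1)) := by
    refine ContinuousOn.rpow_const continuousOn_id fun x hx => Or.inl ?_
    have : (1:ℝ) ≤ x := le_trans hk1 hx.1
    positivity
  have hderiv : ∀ x ∈ Set.Ioo (k:ℝ) ((k:ℝ)+1),
      HasDerivAt (fun x : ℝ => x ^ (-γ)) ((-γ) * x ^ (-γ-1)) x := by
    intro x hx
    have hx0 : x ≠ 0 := by
      have : (1:ℝ) ≤ x := le_trans hk1 hx.1.le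
      positivity
    exact Real.hasDerivAt_rpow_const (p := -γ) (Or.inl hx0) (x := x)
  obtain ⟨c, hc, heq⟩ := exists_hasDerivAt_eq_slope (fun x : ℝ => x ^ (-γ))
    (fun x => (-γ) * x ^ (-γ-1)) hab hfc hderiv
  have hc0 : (0:ℝ) < c := lt_of_le_of_lt (by linarith) hc.1
  have hcb : c ≤ (k:ℝ)+1 := hc.2.le
  have hmono : ((k:ℝ)+1) ^ (-γ-1) ≤ c ^ (-γ-1) :=
    Real.rpow_le_rpow_of_nonpos hc0 hcb (by linarith)
  have heq' : (k:ℝ) ^ (-γ) - ((k:ℝ)+1) ^ (-γ) = γ * c ^ (-γ-1) := by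
    have hden : ((k:ℝ)+1) - (k:ℝ) = 1 := by ring
    rw [hden, div_one] at heq
    linarith [heq]
  rw [heq']
  exact mul_le_mul_of_nonneg_left hmono hγ0.le

lemma summable_exp_neg_rpow {C δ : ℝ} (hC : 0 < C) (hδ : 0 < δ) :
    Summable (fun n : ℕ => Real.exp (-(C * ((n:ℝ)+1) ^ δ))) := by
  set j : ℕ := ⌈2/δ⌉₊ + 1 with hj_def
  have hj2 : 2 ≤ δ * (j:ℕ) := by
    have h1 : (2/δ : ℝ) ≤ ⌈2/δ⌉₊ := Nat.le_ceil _
    have h2 : ((⌈2/δ⌉₊ : ℝ)) ≤ (j:ℝ) := by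
      rw [hj_def]; push_cast; linarith
    calc (2:ℝ) = δ * (2/δ) := by field_simp
      _ ≤ δ * (j:ℝ) := by nlinarith
  have key : ∀ n : ℕ, Real.exp (-(C * ((n:ℝ)+1) ^ δ))
      ≤ ((j:ℝ)^j / C^j) * (1/((n:ℝ)+1)^2) := by
    intro n
    set y : ℝ := C * ((n:ℝ)+1) ^ δ with hy_def
    have hn1 : (1:ℝ) ≤ (n:ℝ)+1 := by
      have := Nat.cast_nonneg (α := ℝ) n; linarith
    have hrp : (0:ℝ) < ((n:ℝ)+1) ^ δ := Real.rpow_pos_of_pos (by linarith) _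
    have hy : 0 < y := mul_pos hC hrp
    have hjpos : (0:ℝ) < (j:ℝ) := by rw [hj_def]; push_cast; positivity
    have hexp_ge : (y/(j:ℝ))^j ≤ Real.exp y := by
      have h1 : y/(j:ℝ) ≤ Real.exp (y/(j:ℝ)) := by
        linarith [Real.add_one_le_exp (y/(j:ℝ))]
      calc (y/(j:ℝ))^j ≤ (Real.exp (y/(j:ℝ)))^j :=
            pow_le_pow_left₀ (by positivity) h1 j
        _ = Real.exp ((j:ℝ) * (y/(j:ℝ))) := (Real.exp_nat_mul _ j).symm
        _ = Real.exp y := by rw [mul_div_cancel₀]; exact ne_of_gt hjpos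
    have hyj : C^j * ((n:ℝ)+1)^2 ≤ y^j := by
      have hexp2 : ((n:ℝ)+1)^(2:ℝ) ≤ ((n:ℝ)+1)^(δ*(j:ℝ)) :=
        Real.rpow_le_rpow_of_exponent_le hn1 hj2
      calc C^j * ((n:ℝ)+1)^2 = C^j * ((n:ℝ)+1)^(2:ℝ) := by
            rw [← Real.rpow_natCast ((n:ℝ)+1) 2]; norm_num
        _ ≤ C^j * ((n:ℝ)+1)^(δ*(j:ℝ)) :=
            mul_le_mul_of_nonneg_left hexp2 (by positivity)
        _ = y^j := by
            rw [hy_def, mul_pow, ← Real.rpow_natCast (((n:ℝ)+1)^δ) j,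
              ← Real.rpow_mul (by linarith : (0:ℝ) ≤ (n:ℝ)+1)]
    have hstep : Real.exp (-y) ≤ (j:ℝ)^j / y^j := by
      rw [Real.exp_neg]
      have h1 : ((y/(j:ℝ))^j)⁻¹ = (j:ℝ)^j / y^j := by
        rw [div_pow, inv_div]
      rw [← h1]
      exact inv_anti₀ (by positivity) hexp_ge
    refine hstep.trans ?_
    have hden : 0 < C^j * ((n:ℝ)+1)^2 := by positivity
    calc (j:ℝ)^j / y^j ≤ (j:ℝ)^j / (C^j * ((n:ℝ)+1)^2) :=
          div_le_div_of_nonneg_left (by positivity) hden hyj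
      _ = ((j:ℝ)^j / C^j) * (1/((n:ℝ)+1)^2) := by
            rw [div_mul_div_comm, mul_one]
  refine Summable.of_nonneg_of_le (fun n => (Real.exp_pos _).le) key ?_
  refine Summable.mul_left _ ?_
  have h := (Real.summable_one_div_nat_pow (p := 2)).2 (by norm_num)
  have h2 := (summable_nat_add_iff 1).2 h
  refine h2.congr fun n => ?_
  push_cast
  ring

end BrownianAux

/-- `B` is a standard Brownian motion under `μ`: continuous paths, `B 0 = 0` a.s.,
Gaussian increments with the correct variance, and independent increments. -/
structure IsBrownianMotion {Ω : Type*} [MeasurableSpace Ω] (μ : Measure Ω)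
    (B : ℝ → Ω → ℝ) : Prop where
  isProb : IsProbabilityMeasure μ
  init : ∀ᵐ ω ∂μ, B 0 ω = 0
  cont : ∀ ω, Continuous fun t => B t ω
  meas : ∀ t, Measurable (B t)
  incr : ∀ s t : ℝ, 0 ≤ s → s ≤ t →
    Measure.map (fun ω => B t ω - B s ω) μ = gaussianReal 0 ((t - s).toNNReal)
  indep : ∀ (n : ℕ) (t : ℕ → ℝ), StrictMono t → 0 ≤ t 0 →
    iIndepFun
      (fun i : Fin n => fun ω => B (t (i + 1)) ω - B (t i) ω) μ

section Main

open Real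
open scoped NNReal ENNReal

lemma mgf_factor_bound {Ω : Type*} [MeasurableSpace Ω] {μ : Measure Ω}
    {B : ℝ → Ω → ℝ} (hB : IsBrownianMotion μ B)
    {σ : ℝ} (hσ : 0 < σ) {γ : ℝ} (hγ : γ ∈ Set.Ioo (0 : ℝ) 1)
    {ξ : ℕ → Ω → ℝ}
    (hξ : ∀ n : ℕ, ∀ ω, ξ n ω =
      max (σ * B ((n : ℝ) ^ (-γ)) ω - σ * B (((n : ℝ) + 1) ^ (-γ)) ω) 0)
    {α : ℝ} (hα : 0 < α) (k : ℕ) (hk : 1 ≤ k) :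
    mgf (ξ k) μ (-α) ≤
      Real.exp (-(gaussQ * α * Real.exp (-(α * σ)) * σ * Real.sqrt γ) *
        ((k:ℝ)+1) ^ (-(γ+1)/2)) := by
  obtain ⟨hγ0, hγ1⟩ := hγ
  have hk0 : (0:ℝ) < (k:ℝ) := by exact_mod_cast hk
  set s : ℝ := ((k:ℝ)+1) ^ (-γ) with hs_def
  set tt : ℝ := (k:ℝ) ^ (-γ) with htt_def
  have hs0 : 0 ≤ s := Real.rpow_nonneg (by linarith) _
  have hstt : s < tt := Real.rpow_lt_rpow_of_neg hk0 (by linarith) (by linarith)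
  have htt1 : tt ≤ 1 := by
    calc tt ≤ (1:ℝ) ^ (-γ) :=
          Real.rpow_le_rpow_of_nonpos one_pos (by exact_mod_cast hk) (by linarith)
      _ = 1 := Real.one_rpow _
  set v : ℝ≥0 := (tt - s).toNNReal with hv_def
  have hvc : (v:ℝ) = tt - s := Real.coe_toNNReal _ (by linarith)
  have hv0 : 0 < (v:ℝ) := by rw [hvc]; linarith
  have hv1 : (v:ℝ) ≤ 1 := by rw [hvc]; linarith
  have hmap : Measure.map (fun ω => B tt ω - B s ω) μ = gaussianReal 0 v :=
    hB.incr s tt hs0 hstt.le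
  have hξ_eq : ∀ ω, ξ k ω = max (σ * (B tt ω - B s ω)) 0 := by
    intro ω
    rw [hξ k ω, mul_sub]
  have hmgf_eq : mgf (ξ k) μ (-α)
      = ∫ x, Real.exp (-α * max (σ * x) 0) ∂(gaussianReal 0 v) := by
    have hφ : AEMeasurable (fun ω => B tt ω - B s ω) μ := ((hB.meas tt).sub (hB.meas s)).aemeasurable
    rw [← hmap, integral_map hφ]
    · rw [mgf]
      congr 1
      ext ω
      simp only []
      rw [hξ_eq ω]
    · exact (Continuous.aestronglyMeasurable (by continuity))
  rw [hmgf_eq]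
  refine (gauss_factor_bound hα hσ v hv0 hv1).trans ?_
  rw [Real.exp_le_exp]
  have hKpos : 0 ≤ gaussQ * α * Real.exp (-(α * σ)) * σ :=
    mul_nonneg (mul_nonneg (mul_nonneg gaussQ_pos.le hα.le) (Real.exp_nonneg _)) hσ.le
  have hsqrt : Real.sqrt γ * ((k:ℝ)+1) ^ (-(γ+1)/2) ≤ Real.sqrt v := by
    have h1 : γ * ((k:ℝ)+1) ^ (-γ-1) ≤ (v:ℝ) := by
      rw [hvc]; exact rpow_diff_ge hγ0 k hk
    have h2 : Real.sqrt (γ * ((k:ℝ)+1) ^ (-γ-1)) ≤ Real.sqrt v := Real.sqrt_le_sqrt h1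
    refine le_trans (le_of_eq ?_) h2
    rw [Real.sqrt_mul hγ0.le]
    congr 1
    have hb : (0:ℝ) ≤ (k:ℝ)+1 := by linarith
    rw [show ((k:ℝ)+1) ^ (-γ-1) = (((k:ℝ)+1) ^ (-(γ+1)/2))^2 by
      rw [← Real.rpow_natCast (((k:ℝ)+1) ^ (-(γ+1)/2)) 2, ← Real.rpow_mul hb]
      norm_num
      ring_nf]
    exact (Real.sqrt_sq (Real.rpow_nonneg hb _)).symm
  calc -(gaussQ * α * Real.exp (-(α * σ)) * σ) * Real.sqrt v
      ≤ -(gaussQ * α * Real.exp (-(α * σ)) * σ) * (Real.sqrt γ * ((k:ℝ)+1) ^ (-(γ+1)/2)) := by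
        rw [neg_mul, neg_mul, neg_le_neg_iff]
        exact mul_le_mul_of_nonneg_left hsqrt hKpos
    _ = -(gaussQ * α * Real.exp (-(α * σ)) * σ * Real.sqrt γ) * ((k:ℝ)+1) ^ (-(γ+1)/2) := by
        ring

lemma xi_indep {Ω : Type*} [MeasurableSpace Ω] {μ : Measure Ω}
    {B : ℝ → Ω → ℝ} (hB : IsBrownianMotion μ B)
    {σ : ℝ} {γ : ℝ} (hγ : γ ∈ Set.Ioo (0 : ℝ) 1)
    {ξ : ℕ → Ω → ℝ}
    (hξ : ∀ n : ℕ, ∀ ω, ξ n ω =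
      max (σ * B ((n : ℝ) ^ (-γ)) ω - σ * B (((n : ℝ) + 1) ^ (-γ)) ω) 0)
    (m : ℕ) :
    iIndepFun (fun i : Fin m => ξ (m - (i:ℕ))) μ := by
  obtain ⟨hγ0, hγ1⟩ := hγ
  set t : ℕ → ℝ := fun i =>
    if i ≤ m then ((m + 1 - i : ℕ):ℝ) ^ (-γ) else ((i - m : ℕ):ℝ) + 1 with ht_def
  have hmono : StrictMono t := by
    refine strictMono_nat_of_lt_succ fun i => ?_
    rcases le_or_gt (i+1) m with h1 | h1
    · rw [ht_def]
      simp only [if_pos (le_trans (Nat.le_succ i) h1), if_pos h1]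
      refine Real.rpow_lt_rpow_of_neg ?_ ?_ (by linarith)
      · have : 1 ≤ m + 1 - (i+1) := by omega
        exact_mod_cast Nat.lt_of_lt_of_le Nat.zero_lt_one this
      · have : m + 1 - (i+1) < m + 1 - i := by omega
        exact_mod_cast this
    · rcases le_or_gt i m with h2 | h2
      · have hi : i = m := by omega
        rw [ht_def]
        simp only [if_pos h2, if_neg (by omega : ¬ i + 1 ≤ m)]
        have e1 : m + 1 - i = 1 := by omega
        have e2 : i + 1 - m = 1 := by omega
        rw [e1, e2]
        simp [Real.one_rpow]
      · rw [ht_def]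
        simp only [if_neg (by omega : ¬ i ≤ m), if_neg (by omega : ¬ i + 1 ≤ m)]
        have : i - m < i + 1 - m := by omega
        have hc : ((i - m : ℕ):ℝ) < ((i + 1 - m : ℕ):ℝ) := by exact_mod_cast this
        linarith
  have ht0 : 0 ≤ t 0 := by
    rw [ht_def]
    simp only [if_pos (Nat.zero_le m)]
    exact Real.rpow_nonneg (Nat.cast_nonneg _) _
  have hInd := hB.indep m t hmono ht0
  have hcomp := hInd.comp (fun _ x => max (σ * x) 0)
    (fun _ => (measurable_const.mul measurable_id).max measurable_const)
  have hfam : (fun (i : Fin m) => (fun x => max (σ * x) 0) ∘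
      (fun ω => B (t ((i:ℕ) + 1)) ω - B (t (i:ℕ)) ω)) = fun i : Fin m => ξ (m - (i:ℕ)) := by
    funext i
    have hi : (i:ℕ) < m := i.isLt
    have h1 : t ((i:ℕ)+1) = ((m - (i:ℕ) : ℕ):ℝ) ^ (-γ) := by
      rw [ht_def]
      simp only [if_pos (by omega : (i:ℕ) + 1 ≤ m)]
      have : m + 1 - ((i:ℕ)+1) = m - (i:ℕ) := by omega
      rw [this]
    have h2 : t (i:ℕ) = (((m - (i:ℕ) : ℕ):ℝ) + 1) ^ (-γ) := by
      rw [ht_def]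
      simp only [if_pos (by omega : (i:ℕ) ≤ m)]
      have : ((m + 1 - (i:ℕ) : ℕ):ℝ) = ((m - (i:ℕ) : ℕ):ℝ) + 1 := by
        rw [Nat.cast_sub (by omega), Nat.cast_sub (by omega)]
        push_cast
        ring
      rw [this]
    funext ω
    simp only [Function.comp_apply]
    rw [h1, h2, hξ (m - (i:ℕ)) ω, mul_sub]
  rw [← hfam]
  exact hcomp

end Main

/-- Lemma 2.2: `E [∑ₙ exp (-α ∑_{k=1}^n ξ_k)] < ∞`, where
`ξ_n = (σ B_{n^{-γ}} - σ B_{(n+1)^{-γ}})⁺`. -/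
theorem brownian_exp_sum_integrable {Ω : Type*} [MeasurableSpace Ω] (μ : Measure Ω)
    (B : ℝ → Ω → ℝ) (hB : IsBrownianMotion μ B)
    (σ : ℝ) (hσ : 0 < σ) (γ : ℝ) (hγ : γ ∈ Set.Ioo (0 : ℝ) 1)
    (ξ : ℕ → Ω → ℝ)
    (hξ : ∀ n : ℕ, ∀ ω, ξ n ω =
      max (σ * B ((n : ℝ) ^ (-γ)) ω - σ * B (((n : ℝ) + 1) ^ (-γ)) ω) 0) :
    ∀ α : ℝ, 0 < α →
      (∫⁻ ω, ∑' n : ℕ,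
        ENNReal.ofReal (Real.exp (-α * ∑ k ∈ Finset.Icc 1 (n + 1), ξ k ω)) ∂μ) < ⊤ := by
  intro α hα
  have hprob : IsProbabilityMeasure μ := hB.isProb
  obtain ⟨hγ0, hγ1⟩ := hγ
  have hξmeas : ∀ k, Measurable (ξ k) := by
    intro k
    have : ξ k = fun ω => max (σ * B ((k:ℝ)^(-γ)) ω - σ * B (((k:ℝ)+1)^(-γ)) ω) 0 :=
      funext (hξ k)
    rw [this]
    exact ((measurable_const.mul (hB.meas _)).sub (measurable_const.mul (hB.meas _))).max
      measurable_const
  have hξnonneg : ∀ k ω, 0 ≤ ξ k ω := fun k ω => by rw [hξ k ω]; exact le_max_right _ _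
  set K : ℝ := gaussQ * α * Real.exp (-(α * σ)) * σ * Real.sqrt γ with hK_def
  have hKpos : 0 < K :=
    mul_pos (mul_pos (mul_pos (mul_pos gaussQ_pos hα) (Real.exp_pos _)) hσ)
      (Real.sqrt_pos.2 hγ0)
  set p : ℝ := (γ+1)/2 with hp_def
  have hp0 : 0 < p := by rw [hp_def]; linarith
  have hp1 : p < 1 := by rw [hp_def]; linarith
  set C2 : ℝ := K * (2:ℝ) ^ (-p) with hC2_def
  have hC2 : 0 < C2 := mul_pos hKpos (Real.rpow_pos_of_pos two_pos _)
  rw [lintegral_tsum (f := fun (n : ℕ) (ω : Ω) =>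
      ENNReal.ofReal (Real.exp (-α * ∑ k ∈ Finset.Icc 1 (n + 1), ξ k ω)))
    (fun n => Measurable.aemeasurable
      (((measurable_const.mul (Finset.measurable_sum _ fun k _ => hξmeas k)).exp).ennreal_ofReal))]
  have hterm : ∀ n : ℕ,
      (∫⁻ ω, ENNReal.ofReal (Real.exp (-α * ∑ k ∈ Finset.Icc 1 (n + 1), ξ k ω)) ∂μ)
        ≤ ENNReal.ofReal (Real.exp (-(C2 * ((n:ℝ)+1) ^ (1-p)))) := by
    intro n
    set m : ℕ := n + 1 with hm_def
    have hm1 : 1 ≤ m := Nat.le_add_left 1 n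
    have hm0 : (0:ℝ) < (m:ℝ) := by exact_mod_cast hm1
    have hSmeas : Measurable fun ω => ∑ k ∈ Finset.Icc 1 m, ξ k ω :=
      Finset.measurable_sum _ fun k _ => hξmeas k
    have hint : Integrable (fun ω => Real.exp (-α * ∑ k ∈ Finset.Icc 1 m, ξ k ω)) μ := by
      refine Integrable.mono' (integrable_const 1)
        (Real.measurable_exp.comp (measurable_const.mul hSmeas)).aestronglyMeasurable ?_
      refine Filter.Eventually.of_forall fun ω => ?_
      rw [Real.norm_eq_abs, abs_of_pos (Real.exp_pos _)]
      refine Real.exp_le_one_iff.2 ?_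
      have hsum : 0 ≤ ∑ k ∈ Finset.Icc 1 m, ξ k ω :=
        Finset.sum_nonneg fun k _ => hξnonneg k ω
      nlinarith
    have h1 : (∫⁻ ω, ENNReal.ofReal (Real.exp (-α * ∑ k ∈ Finset.Icc 1 m, ξ k ω)) ∂μ)
        = ENNReal.ofReal (mgf (fun ω => ∑ k ∈ Finset.Icc 1 m, ξ k ω) μ (-α)) := by
      rw [← ofReal_integral_eq_lintegral_ofReal hint
        (Filter.Eventually.of_forall fun ω => (Real.exp_pos _).le)]
      rfl
    rw [h1]
    have hsum_eq : (fun ω => ∑ k ∈ Finset.Icc 1 m, ξ k ω)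
        = ∑ i : Fin m, ξ (m - (i:ℕ)) := by
      funext ω
      rw [Finset.sum_apply]
      have e1 : ∑ i : Fin m, ξ (m - (i:ℕ)) ω = ∑ j ∈ Finset.range m, ξ (m - j) ω :=
        Fin.sum_univ_eq_sum_range (fun j => ξ (m - j) ω) m
      have e2 : ∑ j ∈ Finset.range m, ξ (m - j) ω
          = ∑ j ∈ Finset.range m, ξ (j + 1) ω := by
        rw [← Finset.sum_range_reflect (fun j => ξ (j + 1) ω) m]
        refine Finset.sum_congr rfl fun j hj => ?_
        have := Finset.mem_range.1 hj
        congr 1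
        omega
      have e3 : ∑ k ∈ Finset.Icc 1 m, ξ k ω = ∑ j ∈ Finset.range m, ξ (1 + j) ω := by
        rw [← Finset.Ico_add_one_right_eq_Icc, Finset.sum_Ico_eq_sum_range]
        simp
      rw [e1, e2, e3]
      refine Finset.sum_congr rfl fun j _ => ?_
      rw [add_comm]
    rw [hsum_eq]
    have hindep := xi_indep hB ⟨hγ0, hγ1⟩ hξ m
    rw [hindep.mgf_sum (fun i => hξmeas _) Finset.univ (t := -α)]
    refine ENNReal.ofReal_le_ofReal ?_
    have hfac : ∀ i : Fin m, mgf (ξ (m - (i:ℕ))) μ (-α)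
        ≤ Real.exp (-(K * ((m:ℝ)+1) ^ (-p))) := by
      intro i
      have hi : (i:ℕ) < m := i.isLt
      have hk1 : 1 ≤ m - (i:ℕ) := by omega
      refine (mgf_factor_bound hB hσ ⟨hγ0, hγ1⟩ hξ hα (m - (i:ℕ)) hk1).trans ?_
      rw [Real.exp_le_exp]
      have hxx : ((m:ℝ)+1) ^ (-p) ≤ (((m - (i:ℕ) : ℕ):ℝ)+1) ^ (-p) := by
        refine Real.rpow_le_rpow_of_nonpos (by positivity) ?_ (by linarith)
        have h7 : (m - (i:ℕ) : ℕ) ≤ m := Nat.sub_le m _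
        have h8 : ((m - (i:ℕ) : ℕ):ℝ) ≤ (m:ℝ) := by exact_mod_cast h7
        linarith
      have hneg : -(γ+1)/2 = -p := by rw [hp_def]; ring
      calc -(gaussQ * α * Real.exp (-(α * σ)) * σ * Real.sqrt γ) *
            (((m - (i:ℕ) : ℕ):ℝ)+1) ^ (-(γ+1)/2)
          = -(K * (((m - (i:ℕ) : ℕ):ℝ)+1) ^ (-p)) := by rw [hK_def, hneg]; ring
        _ ≤ -(K * ((m:ℝ)+1) ^ (-p)) :=
            neg_le_neg (mul_le_mul_of_nonneg_left hxx hKpos.le)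
    have hprod : (∏ i : Fin m, mgf (ξ (m - (i:ℕ))) μ (-α))
        ≤ ∏ _i : Fin m, Real.exp (-(K * ((m:ℝ)+1) ^ (-p))) :=
      Finset.prod_le_prod (fun i _ => mgf_nonneg) (fun i _ => hfac i)
    refine hprod.trans ?_
    rw [Finset.prod_const, Finset.card_univ, Fintype.card_fin, ← Real.exp_nat_mul,
      Real.exp_le_exp]
    have hmn : ((n:ℝ)+1) = (m:ℝ) := by rw [hm_def]; push_cast; ring
    rw [hmn]
    have key : C2 * (m:ℝ)^(1-p) ≤ (m:ℝ) * (K * ((m:ℝ)+1)^(-p)) := by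
      have h4 : (2*(m:ℝ)) ^ (-p) ≤ ((m:ℝ)+1) ^ (-p) :=
        Real.rpow_le_rpow_of_nonpos (by linarith) (by linarith) (by linarith)
      have h5 : (2*(m:ℝ)) ^ (-p) = 2^(-p) * (m:ℝ)^(-p) :=
        Real.mul_rpow (by norm_num) hm0.le
      have h6 : (m:ℝ)^(1-p) = (m:ℝ) * (m:ℝ)^(-p) := by
        rw [show (1-p) = 1 + (-p) by ring, Real.rpow_add hm0, Real.rpow_one]
      calc C2 * (m:ℝ)^(1-p) = K * (2:ℝ)^(-p) * ((m:ℝ) * (m:ℝ)^(-p)) := by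
            rw [hC2_def, h6]
        _ = (m:ℝ) * (K * ((2*(m:ℝ))^(-p))) := by rw [h5]; ring
        _ ≤ (m:ℝ) * (K * (((m:ℝ)+1)^(-p))) :=
            mul_le_mul_of_nonneg_left (mul_le_mul_of_nonneg_left h4 hKpos.le) hm0.le
    linarith
  calc (∑' n : ℕ, ∫⁻ ω, ENNReal.ofReal
        (Real.exp (-α * ∑ k ∈ Finset.Icc 1 (n + 1), ξ k ω)) ∂μ)
      ≤ ∑' n : ℕ, ENNReal.ofReal (Real.exp (-(C2 * ((n:ℝ)+1) ^ (1-p)))) :=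
        ENNReal.tsum_le_tsum hterm
    _ = ENNReal.ofReal (∑' n : ℕ, Real.exp (-(C2 * ((n:ℝ)+1) ^ (1-p)))) :=
        (ENNReal.ofReal_tsum_of_nonneg (fun n => (Real.exp_pos _).le)
          (summable_exp_neg_rpow hC2 (by linarith))).symm
    _ < ⊤ := ENNReal.ofReal_lt_top
end

section
/- Let B be a standard Brownian motion, σ > 0, γ ∈ (0,1), ξ_n := (σ B_{n^{−γ}} − σ B_{(n+1)^{−γ}})⁺, and α ∈ (0,1). Then almost surely ∑_{n=1}^∞ exp(−α ∑_{k=1}^n ξ_k) < ∞, and consequently, setting H_n := ∏_{k=1}^n (1 + (2/3) ξ_k)⁻¹ (corresponding to α = 1/2, β = 2/3), almost surely ∑_{n=1}^∞ H_n < ∞ and H_n < ∑_{k=n+1}^∞ H_k ξ_k for every n ≥ 1. -/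
open MeasureTheory ProbabilityTheory

section Aux

open Filter

lemma exp_neg_le_one_sub_half_min {t : ℝ} (ht : 0 ≤ t) :
    Real.exp (-t) ≤ 1 - (1/2) * min t 1 := by
  rcases le_or_gt t 1 with h | h
  · rw [min_eq_left h]
    have h1 : Real.exp (-t) ≤ (1 + t)⁻¹ := by
      rw [Real.exp_neg]
      apply inv_anti₀ (by linarith)
      linarith [Real.add_one_le_exp t]
    refine h1.trans ?_
    rw [inv_le_iff_one_le_mul₀ (by linarith)]
    nlinarith
  · rw [min_eq_right h.le]
    have h0 : Real.exp (-t) ≤ Real.exp (-1) := Real.exp_le_exp.2 (by linarith)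
    refine h0.trans ?_
    rw [Real.exp_neg]
    have h2 : (2:ℝ) ≤ Real.exp 1 := by
      have := Real.add_one_le_exp 1; linarith
    have := inv_anti₀ (by norm_num : (0:ℝ) < 2) h2
    linarith

lemma core_bound (α σ : ℝ) (hα : 0 < α) (hσ : 0 < σ) {c : ℝ} (hc : 0 < c) (hc1 : c ≤ 1) :
    ∫ x, Real.exp (-α * max (σ * (c * x)) 0) ∂(gaussianReal 0 1)
      ≤ 1 - ((1/2) * min (α*σ) 1 * ((gaussianReal 0 1) (Set.Icc 1 2)).toReal) * c := by
  set P := gaussianReal 0 1 with hP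
  set q := (P (Set.Icc 1 2)).toReal with hq
  have hq0 : 0 ≤ q := ENNReal.toReal_nonneg
  have hcont : Continuous (fun x : ℝ => min (α * max (σ*(c*x)) 0) 1) := by
    apply Continuous.min _ continuous_const
    exact (continuous_const.mul ((continuous_const.mul
      (continuous_const.mul continuous_id)).max continuous_const))
  have hminb : ∀ x : ℝ, 0 ≤ min (α * max (σ*(c*x)) 0) 1 ∧ min (α * max (σ*(c*x)) 0) 1 ≤ 1 := by
    intro x
    constructor
    · exact le_min (mul_nonneg hα.le (le_max_right _ _)) one_pos.le
    · exact min_le_right _ _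
  have intmin : Integrable (fun x : ℝ => min (α * max (σ*(c*x)) 0) 1) P := by
    refine Integrable.mono' (integrable_const 1) hcont.aestronglyMeasurable ?_
    filter_upwards with x
    rw [Real.norm_eq_abs, abs_of_nonneg (hminb x).1]
    exact (hminb x).2
  have int1 : Integrable (fun x : ℝ => Real.exp (-α * max (σ * (c * x)) 0)) P := by
    have hcont1 : Continuous (fun x : ℝ => Real.exp (-α * max (σ * (c * x)) 0)) := by
      apply Real.continuous_exp.comp
      exact continuous_const.mul ((continuous_const.mul
        (continuous_const.mul continuous_id)).max continuous_const)
    refine Integrable.mono' (integrable_const 1) hcont1.aestronglyMeasurable ?_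
    filter_upwards with x
    rw [Real.norm_eq_abs, abs_of_nonneg (Real.exp_pos _).le, ← Real.exp_zero]
    apply Real.exp_le_exp.2
    have : 0 ≤ max (σ * (c * x)) 0 := le_max_right _ _
    nlinarith
  have int2 : Integrable (fun x : ℝ => 1 - (1/2) * min (α * max (σ*(c*x)) 0) 1) P :=
    (integrable_const 1).sub (intmin.const_mul _)
  have hpt : ∀ x : ℝ, Real.exp (-α * max (σ * (c * x)) 0)
      ≤ 1 - (1/2) * min (α * max (σ*(c*x)) 0) 1 := by
    intro x
    have h0 : 0 ≤ α * max (σ*(c*x)) 0 := mul_nonneg hα.le (le_max_right _ _)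
    have := exp_neg_le_one_sub_half_min h0
    rwa [← neg_mul] at this
  calc ∫ x, Real.exp (-α * max (σ * (c * x)) 0) ∂P
      ≤ ∫ x, (1 - (1/2) * min (α * max (σ*(c*x)) 0) 1) ∂P :=
        integral_mono int1 int2 hpt
    _ = 1 - (1/2) * ∫ x, min (α * max (σ*(c*x)) 0) 1 ∂P := by
        rw [integral_sub (integrable_const 1) (intmin.const_mul _), integral_const,
          integral_const_mul]
        simp
    _ ≤ 1 - ((1/2) * min (α*σ) 1 * q) * c := by
        have key : min (α*σ) 1 * q * c ≤ ∫ x, min (α * max (σ*(c*x)) 0) 1 ∂P := by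
          have hs : MeasurableSet (Set.Icc (1:ℝ) 2) := measurableSet_Icc
          have step1 : ∫ x in Set.Icc (1:ℝ) 2, min (α*σ*c) 1 ∂P
              ≤ ∫ x in Set.Icc (1:ℝ) 2, min (α * max (σ*(c*x)) 0) 1 ∂P := by
            apply setIntegral_mono_on (integrableOn_const (measure_lt_top _ _).ne)
              (intmin.integrableOn) hs
            intro x hx
            have hx1 : (1:ℝ) ≤ x := hx.1
            have hmax : max (σ*(c*x)) 0 = σ*(c*x) :=
              max_eq_left (by positivity)
            rw [hmax]
            apply min_le_min _ le_rfl
            nlinarith [mul_nonneg (mul_nonneg (mul_nonneg hα.le hσ.le) hc.le)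
              (by linarith : (0:ℝ) ≤ x - 1)]
          have step2 : ∫ x in Set.Icc (1:ℝ) 2, min (α * max (σ*(c*x)) 0) 1 ∂P
              ≤ ∫ x, min (α * max (σ*(c*x)) 0) 1 ∂P := by
            apply setIntegral_le_integral intmin
            filter_upwards with x using (hminb x).1
          have hconst : ∫ x in Set.Icc (1:ℝ) 2, min (α*σ*c) 1 ∂P = q * min (α*σ*c) 1 := by
            rw [setIntegral_const, smul_eq_mul, measureReal_def]
          have hminc : c * min (α*σ) 1 ≤ min (α*σ*c) 1 := by
            rcases le_total (α*σ*c) 1 with h | h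
            · rw [min_eq_left h]
              have h5 : min (α*σ) 1 ≤ α*σ := min_le_left _ _
              nlinarith
            · rw [min_eq_right h]
              have h5 : min (α*σ) 1 ≤ 1 := min_le_right _ _
              nlinarith
          calc min (α*σ) 1 * q * c = q * (c * min (α*σ) 1) := by ring
            _ ≤ q * min (α*σ*c) 1 := by
                apply mul_le_mul_of_nonneg_left hminc hq0
            _ = ∫ x in Set.Icc (1:ℝ) 2, min (α*σ*c) 1 ∂P := hconst.symm
            _ ≤ _ := step1.trans step2
        linarith

lemma gauss_q_pos : 0 < ((gaussianReal 0 1) (Set.Icc 1 2)).toReal := by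
  have h1 : (gaussianReal 0 1) (Set.Icc 1 2) = ∫⁻ x in Set.Icc (1:ℝ) 2, gaussianPDF 0 1 x :=
    gaussianReal_apply 0 one_ne_zero _
  have hpos : 0 < (gaussianReal 0 1) (Set.Icc 1 2) := by
    rw [h1]
    rw [lintegral_pos_iff_support (measurable_gaussianPDF 0 1)]
    have hsupp : Function.support (gaussianPDF 0 1) = Set.univ := by
      ext x; simp [Function.mem_support, (gaussianPDF_pos 0 one_ne_zero x).ne']
    rw [hsupp, Measure.restrict_apply MeasurableSet.univ, Set.univ_inter]
    simp [Real.volume_Icc]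
  have hfin : (gaussianReal 0 1) (Set.Icc 1 2) < ⊤ := measure_lt_top _ _
  exact ENNReal.toReal_pos hpos.ne' hfin.ne

lemma mgf_xi_le {Ω : Type*} [MeasurableSpace Ω] {μ : Measure Ω}
    {Y : Ω → ℝ} (hY : Measurable Y) {w : NNReal} (hw : w ≠ 0) (hw1 : (w:ℝ) ≤ 1)
    (hmap : Measure.map Y μ = gaussianReal 0 w)
    (α σ : ℝ) (hα : 0 < α) (hσ : 0 < σ) :
    mgf (fun ω => max (σ * Y ω) 0) μ (-α)
      ≤ 1 - ((1/2) * min (α*σ) 1 * ((gaussianReal 0 1) (Set.Icc 1 2)).toReal)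
          * Real.sqrt w := by
  set c := Real.sqrt w with hcdef
  have hc : 0 < c := Real.sqrt_pos.2 (by positivity)
  have hc1 : c ≤ 1 := Real.sqrt_le_one.2 hw1
  have hφ : Continuous (fun x : ℝ => Real.exp (-α * max (σ * x) 0)) := by
    apply Real.continuous_exp.comp
    exact continuous_const.mul ((continuous_const.mul continuous_id).max continuous_const)
  have hscale : gaussianReal 0 w = (gaussianReal 0 1).map (fun x => c * x) := by
    rw [show (fun x : ℝ => c * x) = (c * ·) from rfl, gaussianReal_map_const_mul]
    congr 1
    · ring
    · ext
      push_cast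
      rw [mul_one]
      exact (Real.sq_sqrt (by positivity)).symm
  have h1 : mgf (fun ω => max (σ * Y ω) 0) μ (-α)
      = ∫ x, Real.exp (-α * max (σ * x) 0) ∂(gaussianReal 0 w) := by
    rw [mgf, ← hmap, integral_map hY.aemeasurable hφ.aestronglyMeasurable]
  have h2 : ∫ x, Real.exp (-α * max (σ * x) 0) ∂(gaussianReal 0 w)
      = ∫ x, Real.exp (-α * max (σ * (c * x)) 0) ∂(gaussianReal 0 1) := by
    rw [hscale, integral_map (measurable_const_mul c).aemeasurable hφ.aestronglyMeasurable]
  rw [h1, h2]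
  exact core_bound α σ hα hσ hc hc1

lemma v_bounds {γ : ℝ} (hγ0 : 0 < γ) (hγ1 : γ < 1) {a : ℝ} (ha : 1 ≤ a) :
    0 < a ^ (-γ) - (a+1) ^ (-γ) ∧ a ^ (-γ) - (a+1) ^ (-γ) ≤ 1 ∧
      γ * (a+1) ^ (-(1+γ)) ≤ a ^ (-γ) - (a+1) ^ (-γ) := by
  have ha0 : 0 < a := lt_of_lt_of_le one_pos ha
  have hb0 : 0 < a + 1 := by linarith
  refine ⟨?_, ?_, ?_⟩
  · have := Real.rpow_lt_rpow_of_neg ha0 (by linarith : a < a + 1) (neg_neg_iff_pos.2 hγ0)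
    linarith
  · have h1 : a ^ (-γ) ≤ 1 :=
      Real.rpow_le_one_of_one_le_of_nonpos ha (by linarith)
    have h2 : 0 ≤ (a+1) ^ (-γ) := Real.rpow_nonneg hb0.le _
    linarith
  · -- Bernoulli : (1 + s)^γ ≤ 1 + γ s with s = -(a+1)⁻¹
    have hs1 : -1 ≤ -(a+1)⁻¹ := by
      have : (a+1)⁻¹ ≤ 1 := by
        rw [inv_le_one_iff₀]; right; linarith
      linarith
    have hbern := rpow_one_add_le_one_add_mul_self hs1 hγ0.le hγ1.le
    have hid : (1 : ℝ) + -(a+1)⁻¹ = a / (a+1) := by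
      field_simp
      ring
    rw [hid] at hbern
    -- hbern : (a/(a+1))^γ ≤ 1 + γ * (-(a+1)⁻¹)
    have hsplit : (a+1) ^ (-γ) = a ^ (-γ) * (a / (a+1)) ^ γ := by
      rw [Real.div_rpow ha0.le hb0.le, Real.rpow_neg ha0.le, Real.rpow_neg hb0.le]
      field_simp
    have hexp : (a+1) ^ (-(1+γ)) = (a+1) ^ (-γ) * (a+1)⁻¹ := by
      rw [show -(1+γ) = -γ + -1 by ring, Real.rpow_add hb0, Real.rpow_neg_one]
    have hmono : (a+1) ^ (-γ) ≤ a ^ (-γ) :=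
      (Real.rpow_lt_rpow_of_neg ha0 (by linarith) (neg_neg_iff_pos.2 hγ0)).le
    have hapos : 0 < a ^ (-γ) := Real.rpow_pos_of_pos ha0 _
    have hbpos : 0 < (a+1) ^ (-γ) := Real.rpow_pos_of_pos hb0 _
    have hinvpos : 0 < (a+1)⁻¹ := by positivity
    calc γ * (a+1) ^ (-(1+γ)) = (a+1) ^ (-γ) * (γ * (a+1)⁻¹) := by rw [hexp]; ring
      _ ≤ a ^ (-γ) * (γ * (a+1)⁻¹) := by
          apply mul_le_mul_of_nonneg_right hmono (by positivity)
      _ ≤ a ^ (-γ) - (a+1) ^ (-γ) := by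
          rw [hsplit]
          have : a ^ (-γ) * (a / (a+1)) ^ γ ≤ a ^ (-γ) * (1 - γ * (a+1)⁻¹) := by
            apply mul_le_mul_of_nonneg_left _ hapos.le
            linarith
          nlinarith

lemma prod_reflect_Icc {M : Type*} [CommMonoid M] (f : ℕ → M) (N : ℕ) :
    ∏ i : Fin N, f (N - (i:ℕ)) = ∏ k ∈ Finset.Icc 1 N, f k := by
  rw [← Finset.Ico_add_one_right_eq_Icc, Finset.prod_Ico_eq_prod_range]
  rw [Fin.prod_univ_eq_prod_range (fun i => f (N - i)) N]
  have h := Finset.prod_range_reflect (fun j => f (1 + j)) N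
  simp only [Nat.add_sub_cancel, Nat.succ_sub_one] at h ⊢
  rw [← h]
  apply Finset.prod_congr rfl
  intro i hi
  rw [Finset.mem_range] at hi
  congr 1
  omega

lemma sum_reflect_Icc {M : Type*} [AddCommMonoid M] (f : ℕ → M) (N : ℕ) :
    ∑ i : Fin N, f (N - (i:ℕ)) = ∑ k ∈ Finset.Icc 1 N, f k := by
  rw [← Finset.Ico_add_one_right_eq_Icc, Finset.sum_Ico_eq_sum_range]
  rw [Fin.sum_univ_eq_sum_range (fun i => f (N - i)) N]
  have h := Finset.sum_range_reflect (fun j => f (1 + j)) N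
  simp only [Nat.add_sub_cancel, Nat.succ_sub_one] at h ⊢
  rw [← h]
  apply Finset.sum_congr rfl
  intro i hi
  rw [Finset.mem_range] at hi
  congr 1
  omega

lemma exp_neg_le_factorial_div {x : ℝ} (hx : 0 < x) (m : ℕ) :
    Real.exp (-x) ≤ (m.factorial : ℝ) / x^m := by
  have h1 : x^m / (m.factorial : ℝ) ≤ Real.exp x := by
    refine le_trans ?_ (Real.sum_le_exp_of_nonneg hx.le (m+1))
    have hnn : ∀ i ∈ Finset.range (m+1), (0:ℝ) ≤ x^i / (i.factorial : ℝ) := by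
      intro i _; positivity
    calc x^m / (m.factorial : ℝ) = ∑ i ∈ {m}, x^i / (i.factorial : ℝ) := by simp
      _ ≤ _ := Finset.sum_le_sum_of_subset_of_nonneg (by simp) (fun i hi _ => hnn i hi)
  have h2 : (0:ℝ) < x^m / (m.factorial : ℝ) := by positivity
  rw [Real.exp_neg]
  calc (Real.exp x)⁻¹ ≤ (x^m / (m.factorial : ℝ))⁻¹ := inv_anti₀ h2 h1
    _ = (m.factorial : ℝ) / x^m := by rw [inv_div]

lemma summable_exp_bound {c p : ℝ} (hc : 0 < c) (hp0 : 0 ≤ p) (hp : p < 1) :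
    Summable fun n : ℕ => Real.exp (-(c * ((n:ℝ)+1) * ((n:ℝ)+2) ^ (-p))) := by
  set δ := 1 - p with hδ
  have hδ0 : 0 < δ := by rw [hδ]; linarith
  obtain ⟨m, hm⟩ := exists_nat_ge (2 / δ)
  have hm2 : 2 ≤ (m:ℕ) * δ := by
    rw [div_le_iff₀ hδ0] at hm; linarith
  set K := (m.factorial : ℝ) / (c/2)^m with hK
  have hK0 : 0 < K := by rw [hK]; positivity
  have hcomp : Summable fun n : ℕ => K * ((n:ℝ)+2) ^ (-(2:ℝ)) := by
    have h4 : Summable (fun n : ℕ => ((n:ℝ)) ^ (-(2:ℝ))) :=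
      Real.summable_nat_rpow.2 (by norm_num)
    have h5 := (summable_nat_add_iff 2).2 h4
    have h6 : (fun n : ℕ => (((n+2 : ℕ)):ℝ) ^ (-(2:ℝ))) = fun n : ℕ => ((n:ℝ)+2) ^ (-(2:ℝ)) := by
      funext n; push_cast; ring_nf
    rw [h6] at h5
    exact h5.mul_left K
  refine Summable.of_nonneg_of_le (fun n => (Real.exp_pos _).le) (fun n => ?_) hcomp
  have hb1 : (1:ℝ) ≤ (n:ℝ)+2 := by linarith [Nat.cast_nonneg (α := ℝ) n]
  have hb0 : (0:ℝ) < (n:ℝ)+2 := by linarith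
  set x := (c/2) * ((n:ℝ)+2) ^ δ with hx
  have hx0 : 0 < x := by rw [hx]; positivity
  have hexp1 : x ≤ c * ((n:ℝ)+1) * ((n:ℝ)+2) ^ (-p) := by
    have h1 : ((n:ℝ)+2) ^ δ = ((n:ℝ)+2) * ((n:ℝ)+2) ^ (-p) := by
      rw [hδ, show (1:ℝ) - p = 1 + (-p) by ring, Real.rpow_add hb0, Real.rpow_one]
    have hrpow0 : (0:ℝ) < ((n:ℝ)+2) ^ (-p) := Real.rpow_pos_of_pos hb0 _
    have h2 : ((n:ℝ)+2) * ((n:ℝ)+2) ^ (-p) ≤ (2*((n:ℝ)+1)) * ((n:ℝ)+2) ^ (-p) :=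
      mul_le_mul_of_nonneg_right (by linarith) hrpow0.le
    calc x = c/2 * (((n:ℝ)+2) * ((n:ℝ)+2) ^ (-p)) := by rw [hx, h1]
      _ ≤ c/2 * ((2*((n:ℝ)+1)) * ((n:ℝ)+2) ^ (-p)) :=
          mul_le_mul_of_nonneg_left h2 (by positivity)
      _ = c * ((n:ℝ)+1) * ((n:ℝ)+2) ^ (-p) := by ring
  have step1 : Real.exp (-(c * ((n:ℝ)+1) * ((n:ℝ)+2) ^ (-p))) ≤ Real.exp (-x) :=
    Real.exp_le_exp.2 (neg_le_neg hexp1)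
  refine step1.trans ((exp_neg_le_factorial_div hx0 m).trans ?_)
  have hpowm : ((n:ℝ)+2) ^ ((2:ℝ)) ≤ (((n:ℝ)+2) ^ δ)^m := by
    rw [← Real.rpow_natCast (((n:ℝ)+2) ^ δ) m, ← Real.rpow_mul hb0.le]
    exact Real.rpow_le_rpow_of_exponent_le hb1 (by rw [mul_comm]; exact hm2)
  have hxm : x^m = (c/2)^m * (((n:ℝ)+2) ^ δ)^m := by rw [hx, mul_pow]
  have h10 : (c/2)^m * ((n:ℝ)+2)^(2:ℝ) ≤ x^m := by
    rw [hxm]; exact mul_le_mul_of_nonneg_left hpowm (by positivity)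
  have h11 : (x^m)⁻¹ ≤ ((c/2)^m * ((n:ℝ)+2)^(2:ℝ))⁻¹ := by
    apply inv_anti₀ _ h10
    have : (0:ℝ) < ((n:ℝ)+2)^(2:ℝ) := Real.rpow_pos_of_pos hb0 _
    positivity
  calc (m.factorial:ℝ)/x^m = (m.factorial:ℝ) * (x^m)⁻¹ := div_eq_mul_inv _ _
    _ ≤ (m.factorial:ℝ) * ((c/2)^m * ((n:ℝ)+2)^(2:ℝ))⁻¹ :=
        mul_le_mul_of_nonneg_left h11 (by positivity)
    _ = K * ((n:ℝ)+2)^(-(2:ℝ)) := by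
        rw [hK, Real.rpow_neg hb0.le, mul_inv]
        ring

lemma integral_eq_prod_mgf {Ω : Type*} [MeasurableSpace Ω] (μ : Measure Ω)
    (B : ℝ → Ω → ℝ) (hB : IsBrownianMotion μ B)
    (σ : ℝ) (γ : ℝ) (hγ0 : 0 < γ)
    (ξ : ℕ → Ω → ℝ)
    (hξ : ∀ n : ℕ, ∀ ω, ξ n ω =
      max (σ * B ((n : ℝ) ^ (-γ)) ω - σ * B (((n : ℝ) + 1) ^ (-γ)) ω) 0)
    (α : ℝ) (N : ℕ) (hN : 1 ≤ N) :
    ∫ ω, Real.exp (-α * ∑ k ∈ Finset.Icc 1 N, ξ k ω) ∂μ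
      = ∏ k ∈ Finset.Icc 1 N, mgf (ξ k) μ (-α) := by
  haveI := hB.isProb
  have hmeasξ : ∀ k, Measurable (ξ k) := by
    intro k
    have hk : ξ k = fun ω => max (σ * B ((k : ℝ) ^ (-γ)) ω - σ * B (((k : ℝ) + 1) ^ (-γ)) ω) 0 :=
      funext (hξ k)
    rw [hk]
    exact (((hB.meas _).const_mul σ).sub ((hB.meas _).const_mul σ)).max measurable_const
  set t : ℕ → ℝ := fun i => if i ≤ N then ((N + 1 - i : ℕ) : ℝ) ^ (-γ) else (i : ℝ) with ht
  have hmono : StrictMono t := by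
    apply strictMono_nat_of_lt_succ
    intro i
    rcases le_or_gt (i+1) N with h | h
    · have hi : i ≤ N := by omega
      rw [ht]
      simp only [if_pos h, if_pos hi]
      have h1 : (0:ℝ) < ((N + 1 - (i+1) : ℕ) : ℝ) := by
        have : 1 ≤ N + 1 - (i+1) := by omega
        exact_mod_cast Nat.lt_of_lt_of_le Nat.zero_lt_one this
      have h2 : ((N + 1 - (i+1) : ℕ) : ℝ) < ((N + 1 - i : ℕ) : ℝ) := by
        have : N + 1 - (i+1) < N + 1 - i := by omega
        exact_mod_cast this
      exact Real.rpow_lt_rpow_of_neg h1 h2 (neg_neg_iff_pos.2 hγ0)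
    · rcases le_or_gt i N with h2 | h2
      · have hiN : i = N := by omega
        rw [ht]
        simp only [if_pos h2, if_neg (by omega : ¬ (i+1) ≤ N)]
        have h3 : (N + 1 - i : ℕ) = 1 := by omega
        rw [h3]
        simp only [Nat.cast_one, Real.one_rpow]
        have : (1:ℝ) ≤ (i:ℝ) := by exact_mod_cast Nat.one_le_iff_ne_zero.2 (by omega)
        push_cast
        linarith
      · rw [ht]
        simp only [if_neg (by omega : ¬ i ≤ N), if_neg (by omega : ¬ (i+1) ≤ N)]
        exact_mod_cast Nat.lt_succ_self i
  have ht0 : 0 ≤ t 0 := by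
    rw [ht]
    simp only [if_pos (Nat.zero_le N)]
    exact Real.rpow_nonneg (Nat.cast_nonneg _) _
  have hind := hB.indep N t hmono ht0
  have hg : Measurable (fun x : ℝ => max (σ * x) 0) :=
    (measurable_id.const_mul σ).max measurable_const
  have hcomp := hind.comp (fun _ => (fun x : ℝ => max (σ * x) 0)) (fun _ => hg)
  have heq : (fun i : Fin N => (fun x : ℝ => max (σ * x) 0) ∘
      (fun ω => B (t ((i:ℕ) + 1)) ω - B (t (i:ℕ)) ω)) = fun i : Fin N => ξ (N - (i:ℕ)) := by
    funext i
    funext ω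
    have hi : (i:ℕ) < N := i.isLt
    have h1 : t ((i:ℕ)+1) = ((N - (i:ℕ) : ℕ) : ℝ) ^ (-γ) := by
      rw [ht]
      simp only [if_pos (by omega : (i:ℕ)+1 ≤ N)]
      have h5 : (N + 1 - ((i:ℕ)+1) : ℕ) = N - (i:ℕ) := by omega
      rw [h5]
    have h2 : t (i:ℕ) = (((N - (i:ℕ) : ℕ) : ℝ) + 1) ^ (-γ) := by
      rw [ht]
      simp only [if_pos (by omega : (i:ℕ) ≤ N)]
      have h4 : (N + 1 - (i:ℕ) : ℕ) = (N - (i:ℕ)) + 1 := by omega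
      rw [h4]
      push_cast
      ring_nf
    simp only [Function.comp_apply]
    rw [hξ (N - (i:ℕ)) ω, h1, h2]
    congr 1
    ring
  rw [heq] at hcomp
  have hmgf := hcomp.mgf_sum (t := -α) (fun i => hmeasξ _) Finset.univ
  have hL : ∫ ω, Real.exp (-α * ∑ k ∈ Finset.Icc 1 N, ξ k ω) ∂μ
      = mgf (∑ i ∈ Finset.univ, fun ω => ξ (N - (i : Fin N):ℕ) ω) μ (-α) := by
    rw [mgf]
    congr 1
    funext ω
    congr 1
    rw [Finset.sum_apply]
    congr 1
    exact (sum_reflect_Icc (fun k => ξ k ω) N).symm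
  rw [← hL] at hmgf
  rw [hmgf]
  exact prod_reflect_Icc (fun k => mgf (ξ k) μ (-α)) N

lemma as_summable {Ω : Type*} [MeasurableSpace Ω] (μ : Measure Ω)
    (B : ℝ → Ω → ℝ) (hB : IsBrownianMotion μ B)
    (σ : ℝ) (hσ : 0 < σ) (γ : ℝ) (hγ : γ ∈ Set.Ioo (0 : ℝ) 1)
    (ξ : ℕ → Ω → ℝ)
    (hξ : ∀ n : ℕ, ∀ ω, ξ n ω =
      max (σ * B ((n : ℝ) ^ (-γ)) ω - σ * B (((n : ℝ) + 1) ^ (-γ)) ω) 0)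
    (α : ℝ) (hα : 0 < α) :
    ∀ᵐ ω ∂μ, Summable fun n : ℕ =>
        Real.exp (-α * ∑ k ∈ Finset.Icc 1 (n + 1), ξ k ω) := by
  haveI := hB.isProb
  obtain ⟨hγ0, hγ1⟩ := hγ
  have hmeasξ : ∀ k, Measurable (ξ k) := by
    intro k
    have hk : ξ k = fun ω => max (σ * B ((k : ℝ) ^ (-γ)) ω - σ * B (((k : ℝ) + 1) ^ (-γ)) ω) 0 :=
      funext (hξ k)
    rw [hk]
    exact (((hB.meas _).const_mul σ).sub ((hB.meas _).const_mul σ)).max measurable_const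
  have hξnn : ∀ k ω, 0 ≤ ξ k ω := fun k ω => by rw [hξ]; exact le_max_right _ _
  set q := ((gaussianReal 0 1) (Set.Icc 1 2)).toReal with hqdef
  have hq : 0 < q := gauss_q_pos
  set c₁ := (1/2) * min (α*σ) 1 * q with hc₁def
  have hc₁ : 0 < c₁ := by
    have : 0 < min (α*σ) 1 := lt_min (by positivity) one_pos
    positivity
  set c₃ := c₁ * Real.sqrt γ with hc₃def
  have hc₃ : 0 < c₃ := by
    have := Real.sqrt_pos.2 hγ0
    positivity
  set p := (1+γ)/2 with hpdef
  have hp0 : 0 ≤ p := by rw [hpdef]; linarith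
  have hp1 : p < 1 := by rw [hpdef]; linarith
  -- per-term mgf bound
  have hterm : ∀ k : ℕ, 1 ≤ k → mgf (ξ k) μ (-α) ≤ Real.exp (-(c₃ * ((k:ℝ)+1) ^ (-p))) := by
    intro k hk
    have hk1 : (1:ℝ) ≤ (k:ℝ) := by exact_mod_cast hk
    obtain ⟨hv0, hv1, hv2⟩ := v_bounds hγ0 hγ1 hk1
    set v := ((k:ℝ)) ^ (-γ) - (((k:ℝ))+1) ^ (-γ) with hvdef
    set w := v.toNNReal with hwdef
    have hwv : (w:ℝ) = v := Real.coe_toNNReal v hv0.le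
    have hw0 : w ≠ 0 := by
      rw [hwdef]
      simp only [ne_eq, Real.toNNReal_eq_zero, not_le]
      exact hv0
    have hw1 : (w:ℝ) ≤ 1 := by rw [hwv]; exact hv1
    set Y : Ω → ℝ := fun ω => B (((k:ℝ)) ^ (-γ)) ω - B ((((k:ℝ))+1) ^ (-γ)) ω with hYdef
    have hYmeas : Measurable Y := (hB.meas _).sub (hB.meas _)
    have hmap : Measure.map Y μ = gaussianReal 0 w := by
      have h0s : (0:ℝ) ≤ (((k:ℝ))+1) ^ (-γ) := Real.rpow_nonneg (by linarith) _
      have hst : (((k:ℝ))+1) ^ (-γ) ≤ ((k:ℝ)) ^ (-γ) := by linarith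
      exact hB.incr _ _ h0s hst
    have hξY : ξ k = fun ω => max (σ * Y ω) 0 := by
      funext ω
      rw [hξ, hYdef]
      congr 1
      ring
    have h1 := mgf_xi_le hYmeas hw0 hw1 hmap α σ hα hσ
    rw [← hξY, ← hqdef, ← hc₁def] at h1
    -- √w ≥ √γ * (k+1)^(-p)
    have hsq : Real.sqrt γ * ((k:ℝ)+1) ^ (-p) ≤ Real.sqrt w := by
      rw [hwv]
      have h3 : Real.sqrt (γ * (((k:ℝ))+1) ^ (-(1+γ))) ≤ Real.sqrt v :=
        Real.sqrt_le_sqrt hv2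
      refine le_trans (le_of_eq ?_) h3
      rw [Real.sqrt_mul hγ0.le, Real.sqrt_eq_rpow ((((k:ℝ))+1) ^ (-(1+γ))),
        ← Real.rpow_mul (by linarith : (0:ℝ) ≤ (k:ℝ)+1)]
      congr 1
      rw [hpdef]
      ring
    have h4 : 1 - c₁ * Real.sqrt w ≤ Real.exp (-(c₁ * Real.sqrt w)) := by
      have := Real.add_one_le_exp (-(c₁ * Real.sqrt w))
      linarith
    have h5 : Real.exp (-(c₁ * Real.sqrt w)) ≤ Real.exp (-(c₃ * ((k:ℝ)+1) ^ (-p))) := by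
      apply Real.exp_le_exp.2
      apply neg_le_neg
      rw [hc₃def]
      calc c₁ * Real.sqrt γ * ((k:ℝ)+1) ^ (-p) = c₁ * (Real.sqrt γ * ((k:ℝ)+1) ^ (-p)) := by
            ring
        _ ≤ c₁ * Real.sqrt w := mul_le_mul_of_nonneg_left hsq hc₁.le
    exact h1.trans (h4.trans h5)
  -- integral bound per n
  have hIb : ∀ n : ℕ, ∫ ω, Real.exp (-α * ∑ k ∈ Finset.Icc 1 (n+1), ξ k ω) ∂μ
      ≤ Real.exp (-(c₃ * ((n:ℝ)+1) * ((n:ℝ)+2) ^ (-p))) := by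
    intro n
    rw [integral_eq_prod_mgf μ B hB σ γ hγ0 ξ hξ α (n+1) (by omega)]
    have hstep : ∀ k ∈ Finset.Icc 1 (n+1),
        mgf (ξ k) μ (-α) ≤ Real.exp (-(c₃ * ((n:ℝ)+2) ^ (-p))) := by
      intro k hk
      rw [Finset.mem_Icc] at hk
      refine (hterm k hk.1).trans ?_
      apply Real.exp_le_exp.2
      apply neg_le_neg
      apply mul_le_mul_of_nonneg_left _ hc₃.le
      apply Real.rpow_le_rpow_of_nonpos
      · positivity
      · have : (k:ℝ) ≤ (n:ℝ)+1 := by exact_mod_cast hk.2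
        linarith
      · rw [hpdef]; linarith
    calc ∏ k ∈ Finset.Icc 1 (n+1), mgf (ξ k) μ (-α)
        ≤ ∏ k ∈ Finset.Icc 1 (n+1), Real.exp (-(c₃ * ((n:ℝ)+2) ^ (-p))) :=
          Finset.prod_le_prod (fun k _ => mgf_nonneg) hstep
      _ = Real.exp (-(c₃ * ((n:ℝ)+2) ^ (-p))) ^ (n+1) := by
          rw [Finset.prod_const, Nat.card_Icc]
          norm_num
      _ = Real.exp (-(c₃ * ((n:ℝ)+1) * ((n:ℝ)+2) ^ (-p))) := by
          rw [← Real.exp_nat_mul]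
          congr 1
          push_cast
          ring
  -- summable bound
  have hb : Summable fun n : ℕ => Real.exp (-(c₃ * ((n:ℝ)+1) * ((n:ℝ)+2) ^ (-p))) :=
    summable_exp_bound hc₃ hp0 hp1
  -- define f and pass to a.e.
  set f : ℕ → Ω → ℝ := fun n ω => Real.exp (-α * ∑ k ∈ Finset.Icc 1 (n+1), ξ k ω) with hfdef
  have hfmeas : ∀ n, Measurable (f n) := by
    intro n
    apply Measurable.exp
    exact (Finset.measurable_sum _ (fun k _ => hmeasξ k)).const_mul (-α)
  have hfnn : ∀ n ω, 0 ≤ f n ω := fun n ω => (Real.exp_pos _).le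
  have hfle1 : ∀ n ω, f n ω ≤ 1 := by
    intro n ω
    rw [hfdef]
    simp only
    rw [← Real.exp_zero]
    apply Real.exp_le_exp.2
    have : 0 ≤ ∑ k ∈ Finset.Icc 1 (n+1), ξ k ω :=
      Finset.sum_nonneg (fun k _ => hξnn k ω)
    nlinarith
  have hfint : ∀ n, Integrable (f n) μ := by
    intro n
    refine Integrable.mono' (integrable_const 1) (hfmeas n).aestronglyMeasurable ?_
    filter_upwards with ω
    rw [Real.norm_eq_abs, abs_of_nonneg (hfnn n ω)]
    exact hfle1 n ω
  have hlint : ∀ n, ∫⁻ ω, ENNReal.ofReal (f n ω) ∂μ = ENNReal.ofReal (∫ ω, f n ω ∂μ) :=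
    fun n => (ofReal_integral_eq_lintegral_ofReal (hfint n)
      (Filter.Eventually.of_forall (hfnn n))).symm
  have hsum_lt : ∑' n, ∫⁻ ω, ENNReal.ofReal (f n ω) ∂μ < ⊤ := by
    have h6 : ∀ n, ∫⁻ ω, ENNReal.ofReal (f n ω) ∂μ
        ≤ ENNReal.ofReal (Real.exp (-(c₃ * ((n:ℝ)+1) * ((n:ℝ)+2) ^ (-p)))) := by
      intro n
      rw [hlint n]
      exact ENNReal.ofReal_le_ofReal (hIb n)
    calc ∑' n, ∫⁻ ω, ENNReal.ofReal (f n ω) ∂μ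
        ≤ ∑' n : ℕ, ENNReal.ofReal (Real.exp (-(c₃ * ((n:ℝ)+1) * ((n:ℝ)+2) ^ (-p)))) :=
          ENNReal.tsum_le_tsum h6
      _ = ENNReal.ofReal (∑' n : ℕ, Real.exp (-(c₃ * ((n:ℝ)+1) * ((n:ℝ)+2) ^ (-p)))) :=
          (ENNReal.ofReal_tsum_of_nonneg (fun n => (Real.exp_pos _).le) hb).symm
      _ < ⊤ := ENNReal.ofReal_lt_top
  have hswap : ∫⁻ ω, ∑' n, ENNReal.ofReal (f n ω) ∂μ < ⊤ := by
    rw [← lintegral_tsum (fun n => ((hfmeas n).ennreal_ofReal).aemeasurable)] at hsum_lt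
    exact hsum_lt
  have hae : ∀ᵐ ω ∂μ, ∑' n, ENNReal.ofReal (f n ω) < ⊤ := by
    exact ae_lt_top (Measurable.ennreal_tsum (fun n => (hfmeas n).ennreal_ofReal)) hswap.ne
  filter_upwards [hae] with ω hω
  have hsum : Summable fun n => (ENNReal.ofReal (f n ω)).toReal :=
    ENNReal.summable_toReal hω.ne
  have : (fun n => (ENNReal.ofReal (f n ω)).toReal) = fun n => f n ω := by
    funext n
    exact ENNReal.toReal_ofReal (hfnn n ω)
  rwa [this] at hsum

lemma inv_one_add_le_exp_half {x : ℝ} (h0 : 0 ≤ x) (h1 : x ≤ 1/2) :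
    (1 + (2/3:ℝ)*x)⁻¹ ≤ Real.exp (-(1/2:ℝ) * x) := by
  have hpos : (0:ℝ) < 1 + (2/3:ℝ)*x := by linarith
  have h4 : (0:ℝ) < 1 - (1/2)*x := by linarith
  rw [show -(1/2:ℝ)*x = -((1/2:ℝ)*x) by ring, Real.exp_neg]
  apply inv_anti₀ (by positivity)
  -- exp((1/2)x) ≤ 1 + (2/3)x
  have h3 : 1 - (1/2)*x ≤ (Real.exp ((1/2)*x))⁻¹ := by
    have := Real.add_one_le_exp (-((1/2)*x))
    rw [Real.exp_neg] at this
    linarith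
  have h2 : Real.exp ((1/2)*x) ≤ (1 - (1/2)*x)⁻¹ := by
    calc Real.exp ((1/2)*x) = ((Real.exp ((1/2)*x))⁻¹)⁻¹ := (inv_inv _).symm
      _ ≤ (1 - (1/2)*x)⁻¹ := inv_anti₀ h4 h3
  refine h2.trans ?_
  rw [inv_le_iff_one_le_mul₀ h4]
  nlinarith

lemma verification_lemma_s10 (g : ℕ → ℝ) (hgnn : ∀ k, 0 ≤ g k)
    (hgto : Tendsto g atTop (nhds 0))
    (hsum : Summable fun n : ℕ => Real.exp (-(1/2 : ℝ) * ∑ k ∈ Finset.Icc 1 (n+1), g k))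
    (H : ℕ → ℝ) (hH : ∀ n, H n = ∏ k ∈ Finset.Icc 1 n, (1 + (2/3 : ℝ) * g k)⁻¹) :
    (Summable fun n : ℕ => H (n+1)) ∧
      ∀ n : ℕ, 1 ≤ n → H n < ∑' k : ℕ, H (k + (n+1)) * g (k + (n+1)) := by
  have hfac : ∀ k, (0:ℝ) < 1 + (2/3:ℝ) * g k := fun k => by nlinarith [hgnn k]
  have hHpos : ∀ n, 0 < H n := fun n => by
    rw [hH]; exact Finset.prod_pos (fun k _ => inv_pos.2 (hfac k))
  have htel : ∀ m, H m - H (m+1) = (2/3:ℝ) * (H (m+1) * g (m+1)) := by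
    intro m
    have h1 : H (m+1) = H m * (1 + (2/3:ℝ)*g (m+1))⁻¹ := by
      rw [hH (m+1), hH m, Finset.prod_Icc_succ_top (by omega : 1 ≤ m+1)]
    have h3 : H (m+1) * (1 + (2/3:ℝ)*g (m+1)) = H m := by
      rw [h1, mul_assoc, inv_mul_cancel₀ (hfac (m+1)).ne', mul_one]
    linear_combination -h3
  have e : ∀ x : ℕ, Finset.Icc 1 x = Finset.Ioc 0 x := fun x => Finset.Icc_add_one_left_eq_Ioc 0 x
  -- eventually small
  obtain ⟨N, hN⟩ : ∃ N, ∀ n, N ≤ n → g n ≤ 1/2 := by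
    have h5 := hgto.eventually (gt_mem_nhds (by norm_num : (0:ℝ) < 1/2))
    rw [eventually_atTop] at h5
    obtain ⟨N, hN⟩ := h5
    exact ⟨N, fun n hn => (hN n hn).le⟩
  set C := H N * Real.exp ((1/2:ℝ) * ∑ k ∈ Finset.Icc 1 N, g k) with hC
  have hkey : ∀ m, N ≤ m → H m ≤ C * Real.exp (-(1/2:ℝ) * ∑ k ∈ Finset.Icc 1 m, g k) := by
    intro m hm
    have hsplit : H m = H N * ∏ k ∈ Finset.Ioc N m, (1 + (2/3:ℝ)*g k)⁻¹ := by
      rw [hH m, hH N, e, e, ← Finset.prod_Ioc_consecutive _ (Nat.zero_le N) hm]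
    have hprodle : ∏ k ∈ Finset.Ioc N m, (1 + (2/3:ℝ)*g k)⁻¹
        ≤ ∏ k ∈ Finset.Ioc N m, Real.exp (-(1/2:ℝ) * g k) := by
      apply Finset.prod_le_prod (fun k _ => (inv_pos.2 (hfac k)).le)
      intro k hk
      rw [Finset.mem_Ioc] at hk
      exact inv_one_add_le_exp_half (hgnn k) (hN k (by omega))
    rw [← Real.exp_sum] at hprodle
    have h7 := Finset.sum_Ioc_consecutive (fun k => g k) (Nat.zero_le N) hm
    have h8 : ∑ k ∈ Finset.Ioc N m, (-(1/2:ℝ) * g k)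
        = (1/2:ℝ) * ∑ k ∈ Finset.Icc 1 N, g k + (-(1/2:ℝ)) * ∑ k ∈ Finset.Icc 1 m, g k := by
      have h7b : ∑ k ∈ Finset.Ioc N m, (-(1/2:ℝ) * g k)
          = -(1/2:ℝ) * ∑ k ∈ Finset.Ioc N m, g k := (Finset.mul_sum _ _ _).symm
      rw [h7b, e, e]
      linarith [h7]
    rw [h8] at hprodle
    calc H m = H N * ∏ k ∈ Finset.Ioc N m, (1 + (2/3:ℝ)*g k)⁻¹ := hsplit
      _ ≤ H N * Real.exp ((1/2:ℝ) * ∑ k ∈ Finset.Icc 1 N, g k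
            + (-(1/2:ℝ)) * ∑ k ∈ Finset.Icc 1 m, g k) :=
          mul_le_mul_of_nonneg_left hprodle (hHpos N).le
      _ = C * Real.exp (-(1/2:ℝ) * ∑ k ∈ Finset.Icc 1 m, g k) := by
          rw [hC, Real.exp_add]
          ring
  have hsummableH : Summable fun n : ℕ => H (n+1) := by
    rw [← summable_nat_add_iff N]
    have hcmp : Summable fun n : ℕ =>
        C * Real.exp (-(1/2:ℝ) * ∑ k ∈ Finset.Icc 1 (n + N + 1), g k) := by
      have h9 := (summable_nat_add_iff N).2 hsum
      have h10 : (fun n : ℕ => Real.exp (-(1/2:ℝ) * ∑ k ∈ Finset.Icc 1 (n + N + 1), g k))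
          = fun n : ℕ => Real.exp (-(1/2:ℝ) * ∑ k ∈ Finset.Icc 1 ((n + N) + 1), g k) := rfl
      exact Summable.mul_left C (by rw [h10]; exact h9)
    apply Summable.of_nonneg_of_le (fun n => (hHpos _).le) _ hcmp
    intro n
    have := hkey (n + N + 1) (by omega)
    exact this
  refine ⟨hsummableH, ?_⟩
  have hH0 : Tendsto H atTop (nhds 0) := by
    rw [← tendsto_add_atTop_iff_nat 1]
    exact hsummableH.tendsto_atTop_zero
  intro n hn
  set F : ℕ → ℝ := fun k => H (k + n) with hF
  have hFto : Tendsto F atTop (nhds 0) := hH0.comp (tendsto_add_atTop_nat n)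
  have hFd : ∀ k, F k - F (k+1) = (2/3:ℝ) * (H (k + (n+1)) * g (k + (n+1))) := by
    intro k
    have h := htel (k + n)
    have e1 : k + 1 + n = k + n + 1 := by omega
    have e2 : k + (n+1) = k + n + 1 := by omega
    show H (k + n) - H (k + 1 + n) = (2/3:ℝ) * (H (k + (n+1)) * g (k + (n+1)))
    rw [e1, e2]
    exact h
  have hpartial : ∀ m, ∑ k ∈ Finset.range m, (2/3:ℝ) * (H (k + (n+1)) * g (k + (n+1)))
      = H n - H (m + n) := by
    intro m
    have h11 : ∀ k, (2/3:ℝ) * (H (k + (n+1)) * g (k + (n+1))) = F k - F (k+1) :=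
      fun k => (hFd k).symm
    calc ∑ k ∈ Finset.range m, (2/3:ℝ) * (H (k + (n+1)) * g (k + (n+1)))
        = ∑ k ∈ Finset.range m, (F k - F (k+1)) := Finset.sum_congr rfl (fun k _ => h11 k)
      _ = F 0 - F m := Finset.sum_range_sub' F m
      _ = H n - H (m + n) := by rw [hF]; simp
  have hnn2 : ∀ k, 0 ≤ (2/3:ℝ) * (H (k + (n+1)) * g (k + (n+1))) :=
    fun k => mul_nonneg (by norm_num) (mul_nonneg (hHpos _).le (hgnn _))
  have hsum2 : Summable fun k : ℕ => (2/3:ℝ) * (H (k + (n+1)) * g (k + (n+1))) := by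
    apply summable_of_sum_range_le (c := H n) hnn2
    intro m
    rw [hpartial m]
    have := (hHpos (m+n)).le
    linarith
  have h12 : Tendsto (fun m => ∑ k ∈ Finset.range m, (2/3:ℝ) * (H (k + (n+1)) * g (k + (n+1))))
      atTop (nhds (∑' k : ℕ, (2/3:ℝ) * (H (k + (n+1)) * g (k + (n+1))))) :=
    hsum2.hasSum.tendsto_sum_nat
  have h13 : Tendsto (fun m => ∑ k ∈ Finset.range m, (2/3:ℝ) * (H (k + (n+1)) * g (k + (n+1))))
      atTop (nhds (H n)) := by
    have h13a : (fun m => ∑ k ∈ Finset.range m, (2/3:ℝ) * (H (k + (n+1)) * g (k + (n+1))))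
        = fun m => H n - H (m + n) := funext hpartial
    rw [h13a]
    have h13b : Tendsto (fun m : ℕ => H n - F m) atTop (nhds (H n - 0)) :=
      tendsto_const_nhds.sub hFto
    rw [sub_zero] at h13b
    exact h13b
  have h15 : ∑' k : ℕ, (2/3:ℝ) * (H (k + (n+1)) * g (k + (n+1))) = H n :=
    tendsto_nhds_unique h12 h13
  have h14 : ∑' k : ℕ, (2/3:ℝ) * (H (k + (n+1)) * g (k + (n+1)))
      = (2/3:ℝ) * ∑' k : ℕ, H (k + (n+1)) * g (k + (n+1)) := tsum_mul_left
  have h16 : ∑' k : ℕ, H (k + (n+1)) * g (k + (n+1)) = (3/2:ℝ) * H n := by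
    rw [h14] at h15
    linarith
  rw [h16]
  have := hHpos n
  linarith

end Aux

/-- Almost surely `∑ₙ exp (-α ∑_{k=1}^n ξ_k) < ∞`, and consequently, with
`H_n = ∏_{k=1}^n (1 + (2/3) ξ_k)⁻¹`, almost surely `∑ₙ H_n < ∞` and
`H_n < ∑_{k=n+1}^∞ H_k ξ_k` for every `n ≥ 1`. -/
theorem brownian_verification {Ω : Type*} [MeasurableSpace Ω] (μ : Measure Ω)
    (B : ℝ → Ω → ℝ) (hB : IsBrownianMotion μ B)
    (σ : ℝ) (hσ : 0 < σ) (γ : ℝ) (hγ : γ ∈ Set.Ioo (0 : ℝ) 1)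
    (ξ : ℕ → Ω → ℝ)
    (hξ : ∀ n : ℕ, ∀ ω, ξ n ω =
      max (σ * B ((n : ℝ) ^ (-γ)) ω - σ * B (((n : ℝ) + 1) ^ (-γ)) ω) 0)
    (α : ℝ) (hα : α ∈ Set.Ioo (0 : ℝ) 1)
    (H : ℕ → Ω → ℝ)
    (hH : ∀ n : ℕ, ∀ ω, H n ω = ∏ k ∈ Finset.Icc 1 n, (1 + (2 / 3 : ℝ) * ξ k ω)⁻¹) :
    (∀ᵐ ω ∂μ, Summable fun n : ℕ =>
        Real.exp (-α * ∑ k ∈ Finset.Icc 1 (n + 1), ξ k ω)) ∧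
    (∀ᵐ ω ∂μ, (Summable fun n : ℕ => H (n + 1) ω) ∧
      ∀ n : ℕ, 1 ≤ n →
        H n ω < ∑' k : ℕ, H (k + (n + 1)) ω * ξ (k + (n + 1)) ω) := by
  obtain ⟨hγ0, hγ1⟩ := hγ
  constructor
  · exact as_summable μ B hB σ hσ γ ⟨hγ0, hγ1⟩ ξ hξ α hα.1
  · have h2 := as_summable μ B hB σ hσ γ ⟨hγ0, hγ1⟩ ξ hξ (1/2 : ℝ) (by norm_num)
    have hto : ∀ ω, Filter.Tendsto (fun n : ℕ => ξ n ω) Filter.atTop (nhds 0) := by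
      intro ω
      have h1 : Filter.Tendsto (fun n : ℕ => ((n:ℝ)) ^ (-γ)) Filter.atTop (nhds 0) :=
        (tendsto_rpow_neg_atTop hγ0).comp tendsto_natCast_atTop_atTop
      have h1' : Filter.Tendsto (fun n : ℕ => (((n:ℝ))+1) ^ (-γ)) Filter.atTop (nhds 0) :=
        (tendsto_rpow_neg_atTop hγ0).comp
          (Filter.tendsto_atTop_add_const_right _ 1 tendsto_natCast_atTop_atTop)
      have h3 : Filter.Tendsto (fun n : ℕ => B (((n:ℝ))^(-γ)) ω) Filter.atTop
          (nhds (B 0 ω)) := ((hB.cont ω).tendsto 0).comp h1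
      have h4 : Filter.Tendsto (fun n : ℕ => B ((((n:ℝ))+1)^(-γ)) ω) Filter.atTop
          (nhds (B 0 ω)) := ((hB.cont ω).tendsto 0).comp h1'
      have h5 : Filter.Tendsto
          (fun n : ℕ => σ * B (((n:ℝ))^(-γ)) ω - σ * B ((((n:ℝ))+1)^(-γ)) ω)
          Filter.atTop (nhds (σ * B 0 ω - σ * B 0 ω)) :=
        (h3.const_mul σ).sub (h4.const_mul σ)
      rw [sub_self] at h5
      have h6 := h5.max (tendsto_const_nhds (x := (0:ℝ)))
      rw [max_self] at h6
      have h7 : (fun n : ℕ => ξ n ω) = fun n : ℕ =>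
          max (σ * B (((n:ℝ))^(-γ)) ω - σ * B ((((n:ℝ))+1)^(-γ)) ω) 0 :=
        funext (fun n => hξ n ω)
      rw [h7]
      exact h6
    filter_upwards [h2] with ω hω
    exact verification_lemma_s10 (fun k => ξ k ω)
      (fun k => by show (0:ℝ) ≤ ξ k ω; rw [hξ]; exact le_max_right _ _)
      (hto ω) hω (fun n => H n ω) (fun n => hH n ω)
end
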